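/- arXiv:2404.19662 — 2 statements merged into one kernel-verified Lean document; each statement's English description precedes it below -/
import Mathlib

section
/- For every positive integer p, Σ_{π ∈ P_2^{bi}(2p)} 2^{cc(π)} = Σ_{l=0}^{p} binom(2p,2l) C_l C_{p-l}, where P_2^{bi}(2p) is the set of pair partitions of [2p] whose intersection graph is bipartite, cc(π) is the number of connected components of the intersection graph, and C_k are Catalan numbers. -/
open Finset

def Crosses {n : ℕ} (V W : Finset (Fin n)) : Prop :=
  ∃ i k j l : Fin n, i < k ∧ k < j ∧ j < l ∧ i ∈ V ∧ j ∈ V ∧ k ∈ W ∧ l ∈ W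

def CrossSym {n : ℕ} (V W : Finset (Fin n)) : Prop := Crosses V W ∨ Crosses W V

def IsPartitionOn {n : ℕ} (S : Finset (Fin n)) (π : Finset (Finset (Fin n))) : Prop :=
  (∀ V ∈ π, V.Nonempty ∧ V ⊆ S) ∧ ∀ i ∈ S, ∃! V, V ∈ π ∧ i ∈ V

def IsPairPartitionOn {n : ℕ} (S : Finset (Fin n)) (π : Finset (Finset (Fin n))) : Prop :=
  IsPartitionOn S π ∧ ∀ V ∈ π, V.card = 2

def IsPairPartition (n : ℕ) (π : Finset (Finset (Fin n))) : Prop :=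
  IsPairPartitionOn Finset.univ π

def NoncrossingPart {n : ℕ} (π : Finset (Finset (Fin n))) : Prop :=
  ∀ V ∈ π, ∀ W ∈ π, V ≠ W → ¬ CrossSym V W

def interGraph {n : ℕ} (π : Finset (Finset (Fin n))) :
    SimpleGraph {V : Finset (Fin n) // V ∈ π} where
  Adj V W := V ≠ W ∧ CrossSym V.1 W.1
  symm := by
    constructor
    rintro V W ⟨h1, h2⟩
    exact ⟨h1.symm, h2.symm⟩
  loopless := by constructor; rintro V ⟨h1, _⟩; exact h1 rfl

noncomputable def ccCount {n : ℕ} (π : Finset (Finset (Fin n))) : ℕ :=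
  Nat.card (interGraph π).ConnectedComponent

def IsBipartitePart {n : ℕ} (π : Finset (Finset (Fin n))) : Prop :=
  (interGraph π).Colorable 2

def IsConnectedPart {n : ℕ} (π : Finset (Finset (Fin n))) : Prop :=
  (interGraph π).Connected

open scoped Classical in
noncomputable def crBlocks {n : ℕ} (π : Finset (Finset (Fin n))) : Finset (Finset (Fin n)) :=
  π.filter (fun V => ∃ W ∈ π, W ≠ V ∧ CrossSym V W)

open scoped Classical in
noncomputable def ncrBlocks {n : ℕ} (π : Finset (Finset (Fin n))) : Finset (Finset (Fin n)) :=
  π.filter (fun V => ¬ ∃ W ∈ π, W ≠ V ∧ CrossSym V W)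

noncomputable def crCount {n : ℕ} (π : Finset (Finset (Fin n))) : ℕ := (crBlocks π).card
noncomputable def ncrCount {n : ℕ} (π : Finset (Finset (Fin n))) : ℕ := (ncrBlocks π).card

open scoped Classical in
noncomputable def compPart {n : ℕ} (π : Finset (Finset (Fin n))) : Finset (Finset (Fin n)) :=
  π.attach.image fun V => Finset.univ.filter fun i : Fin n =>
    ∃ W, ∃ hW : W ∈ π, i ∈ W ∧ (interGraph π).Reachable V ⟨W, hW⟩

def restrictPart {n : ℕ} (π : Finset (Finset (Fin n))) (T : Finset (Fin n)) :
    Finset (Finset (Fin n)) :=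
  π.filter (· ⊆ T)

open scoped Classical in
noncomputable def pairPartitions (n : ℕ) : Finset (Finset (Finset (Fin n))) :=
  Finset.univ.filter (IsPairPartition n)

open scoped Classical in
noncomputable def biPairPartitions (n : ℕ) : Finset (Finset (Finset (Fin n))) :=
  (pairPartitions n).filter IsBipartitePart

open scoped Classical in
noncomputable def biconPairPartitions (n : ℕ) : Finset (Finset (Finset (Fin n))) :=
  (biPairPartitions n).filter IsConnectedPart

open scoped Classical in
noncomputable def ncPairPartitions (n : ℕ) : Finset (Finset (Finset (Fin n))) :=
  (pairPartitions n).filter NoncrossingPart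

open scoped Classical in
noncomputable def ncPartitions (n : ℕ) : Finset (Finset (Finset (Fin n))) :=
  Finset.univ.filter (fun π => IsPartitionOn Finset.univ π ∧ NoncrossingPart π)


/-! ### Auxiliary development -/

open scoped Classical

section Basic

variable {n : ℕ}

lemma crosses_pair_iff {a b c d : Fin n} (hab : a < b) (hcd : c < d) :
    Crosses ({a, b} : Finset (Fin n)) {c, d} ↔ a < c ∧ c < b ∧ b < d := by
  constructor
  · rintro ⟨i, k, j, l, h1, h2, h3, hi, hj, hk, hl⟩
    simp only [Finset.mem_insert, Finset.mem_singleton] at hi hj hk hl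
    simp only [Fin.lt_def] at *
    rcases hi with rfl | rfl <;> rcases hj with rfl | rfl <;>
      rcases hk with rfl | rfl <;> rcases hl with rfl | rfl <;> omega
  · rintro ⟨h1, h2, h3⟩
    exact ⟨a, c, b, d, h1, h2, h3, by simp, by simp, by simp, by simp⟩

lemma crossSym_pair_iff {a b c d : Fin n} (hab : a < b) (hcd : c < d) :
    CrossSym ({a, b} : Finset (Fin n)) {c, d} ↔
      (a < c ∧ c < b ∧ b < d) ∨ (c < a ∧ a < d ∧ d < b) := by
  unfold CrossSym
  rw [crosses_pair_iff hab hcd, crosses_pair_iff hcd hab]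

lemma pair_of_card_two {V : Finset (Fin n)} (h : V.card = 2) :
    ∃ a b, a < b ∧ V = {a, b} := by
  obtain ⟨x, y, hxy, rfl⟩ := Finset.card_eq_two.mp h
  rcases lt_or_gt_of_ne hxy with h' | h'
  · exact ⟨x, y, h', rfl⟩
  · exact ⟨y, x, h', by rw [Finset.pair_comm]⟩

lemma block_unique {S : Finset (Fin n)} {π : Finset (Finset (Fin n))}
    (h : IsPartitionOn S π) {V W : Finset (Fin n)} {i : Fin n}
    (hV : V ∈ π) (hW : W ∈ π) (hiV : i ∈ V) (hiW : i ∈ W) : V = W := by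
  have hiS : i ∈ S := (h.1 V hV).2 hiV
  obtain ⟨U, _, hU⟩ := h.2 i hiS
  rw [hU V ⟨hV, hiV⟩, hU W ⟨hW, hiW⟩]

lemma biUnion_blocks {S : Finset (Fin n)} {π : Finset (Finset (Fin n))}
    (h : IsPartitionOn S π) : π.biUnion id = S := by
  ext i
  simp only [Finset.mem_biUnion, id]
  constructor
  · rintro ⟨V, hV, hiV⟩; exact (h.1 V hV).2 hiV
  · intro hi
    obtain ⟨V, hV, _⟩ := h.2 i hi
    exact ⟨V, hV.1, hV.2⟩

lemma card_of_pairPartitionOn {S : Finset (Fin n)} {π : Finset (Finset (Fin n))}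
    (h : IsPairPartitionOn S π) : S.card = 2 * π.card := by
  rw [← biUnion_blocks h.1, Finset.card_biUnion]
  · simp only [id]
    rw [Finset.sum_congr rfl (fun V hV => h.2 V hV), Finset.sum_const, smul_eq_mul,
      Nat.mul_comm]
  · intro V hV W hW hVW
    show Disjoint V W
    rw [Finset.disjoint_left]
    intro i hiV hiW
    exact hVW (block_unique h.1 hV hW hiV hiW)

lemma isPairPartitionOn_union {T₁ T₂ : Finset (Fin n)} {π₁ π₂ : Finset (Finset (Fin n))}
    (h1 : IsPairPartitionOn T₁ π₁) (h2 : IsPairPartitionOn T₂ π₂) (hd : Disjoint T₁ T₂) :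
    IsPairPartitionOn (T₁ ∪ T₂) (π₁ ∪ π₂) := by
  refine ⟨⟨?_, ?_⟩, ?_⟩
  · intro V hV
    rcases Finset.mem_union.mp hV with hV | hV
    · exact ⟨(h1.1.1 V hV).1, (h1.1.1 V hV).2.trans Finset.subset_union_left⟩
    · exact ⟨(h2.1.1 V hV).1, (h2.1.1 V hV).2.trans Finset.subset_union_right⟩
  · intro i hi
    rcases Finset.mem_union.mp hi with hi | hi
    · obtain ⟨V, hV, hVu⟩ := h1.1.2 i hi
      refine ⟨V, ⟨Finset.mem_union_left _ hV.1, hV.2⟩, ?_⟩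
      rintro W ⟨hW, hiW⟩
      rcases Finset.mem_union.mp hW with hW | hW
      · exact hVu W ⟨hW, hiW⟩
      · exact absurd ((h2.1.1 W hW).2 hiW) (fun h => Finset.disjoint_left.mp hd hi h)
    · obtain ⟨V, hV, hVu⟩ := h2.1.2 i hi
      refine ⟨V, ⟨Finset.mem_union_right _ hV.1, hV.2⟩, ?_⟩
      rintro W ⟨hW, hiW⟩
      rcases Finset.mem_union.mp hW with hW | hW
      · exact absurd ((h1.1.1 W hW).2 hiW) (fun h => Finset.disjoint_left.mp hd h hi)
      · exact hVu W ⟨hW, hiW⟩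
  · intro V hV
    rcases Finset.mem_union.mp hV with hV | hV
    · exact h1.2 V hV
    · exact h2.2 V hV

lemma disjoint_parts {T₁ T₂ : Finset (Fin n)} {π₁ π₂ : Finset (Finset (Fin n))}
    (h1 : IsPairPartitionOn T₁ π₁) (h2 : IsPairPartitionOn T₂ π₂) (hd : Disjoint T₁ T₂)
    {V : Finset (Fin n)} (hV1 : V ∈ π₁) (hV2 : V ∈ π₂) : False := by
  obtain ⟨i, hi⟩ := (h1.1.1 V hV1).1
  exact Finset.disjoint_left.mp hd ((h1.1.1 V hV1).2 hi) ((h2.1.1 V hV2).2 hi)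

end Basic


section Ncpp

variable {n : ℕ}

noncomputable def ncpp {n : ℕ} (S : Finset (Fin n)) : Finset (Finset (Finset (Fin n))) :=
  Finset.univ.filter (fun π => IsPairPartitionOn S π ∧ NoncrossingPart π)

lemma mem_ncpp {S : Finset (Fin n)} {π : Finset (Finset (Fin n))} :
    π ∈ ncpp S ↔ IsPairPartitionOn S π ∧ NoncrossingPart π := by
  simp [ncpp]

lemma ncpp_eq_empty_of_odd {S : Finset (Fin n)} (h : S.card % 2 = 1) : ncpp S = ∅ := by
  rw [Finset.eq_empty_iff_forall_notMem]
  intro π hπ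
  have := card_of_pairPartitionOn (mem_ncpp.mp hπ).1
  omega

lemma ncpp_empty_eq {S : Finset (Fin n)} (h : S = ∅) : ncpp S = {∅} := by
  subst h
  ext π
  simp only [mem_ncpp, Finset.mem_singleton]
  constructor
  · rintro ⟨⟨⟨h1, _⟩, _⟩, _⟩
    rw [Finset.eq_empty_iff_forall_notMem]
    intro V hV
    obtain ⟨i, hi⟩ := (h1 V hV).1
    exact absurd ((h1 V hV).2 hi) (Finset.notMem_empty i)
  · rintro rfl
    refine ⟨⟨⟨?_, ?_⟩, ?_⟩, ?_⟩ <;> simp [NoncrossingPart]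

lemma restrict_mem_ncpp {S T : Finset (Fin n)} {π : Finset (Finset (Fin n))}
    (hπ : π ∈ ncpp S) (hT : T ⊆ S) (hbl : ∀ V ∈ π, V ⊆ T ∨ Disjoint V T) :
    π.filter (· ⊆ T) ∈ ncpp T := by
  obtain ⟨⟨⟨hne, hcov⟩, hcard⟩, hnc⟩ := mem_ncpp.mp hπ
  refine mem_ncpp.mpr ⟨⟨⟨?_, ?_⟩, ?_⟩, ?_⟩
  · intro V hV
    obtain ⟨hV, hVT⟩ := Finset.mem_filter.mp hV
    exact ⟨(hne V hV).1, hVT⟩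
  · intro i hi
    obtain ⟨V, ⟨hV, hiV⟩, hVu⟩ := hcov i (hT hi)
    have hVT : V ⊆ T := by
      rcases hbl V hV with h | h
      · exact h
      · exact absurd hi (Finset.disjoint_left.mp h hiV)
    refine ⟨V, ⟨Finset.mem_filter.mpr ⟨hV, hVT⟩, hiV⟩, ?_⟩
    rintro W ⟨hW, hiW⟩
    exact hVu W ⟨(Finset.mem_filter.mp hW).1, hiW⟩
  · intro V hV
    exact hcard V (Finset.mem_filter.mp hV).1
  · intro V hV W hW hVW
    exact hnc V (Finset.mem_filter.mp hV).1 W (Finset.mem_filter.mp hW).1 hVW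

end Ncpp


section Fiber

variable {n : ℕ}

lemma not_crossSym_of_separated {V W : Finset (Fin n)} (h : ∀ v ∈ V, ∀ w ∈ W, v < w) :
    ¬ CrossSym V W := by
  rintro (⟨i, k, j, l, h1, h2, h3, hi, hj, hk, hl⟩ | ⟨i, k, j, l, h1, h2, h3, hi, hj, hk, hl⟩)
  · exact absurd (h j hj k hk) h2.asymm
  · exact absurd (h k hk i hi) h1.asymm

lemma not_crossSym_pair_of_nested {m j : Fin n} {W : Finset (Fin n)}
    (h : ∀ w ∈ W, m < w ∧ w < j) : ¬ CrossSym ({m, j} : Finset (Fin n)) W := by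
  rintro (⟨i, k, j', l, h1, h2, h3, hi, hj, hk, hl⟩ | ⟨i, k, j', l, h1, h2, h3, hi, hj, hk, hl⟩)
  · simp only [Finset.mem_insert, Finset.mem_singleton] at hi hj
    rcases hj with rfl | rfl
    · exact absurd (h k hk).1 h2.asymm
    · exact absurd (h l hl).2 h3.asymm
  · simp only [Finset.mem_insert, Finset.mem_singleton] at hk hl
    rcases hk with rfl | rfl
    · exact absurd (h i hi).1 h1.asymm
    · exact absurd (h j' hj).2 h2.asymm

lemma single_pair_partition {m j : Fin n} (hmj : m ≠ j) :
    IsPairPartitionOn ({m, j} : Finset (Fin n)) {({m, j} : Finset (Fin n))} := by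
  refine ⟨⟨?_, ?_⟩, ?_⟩
  · intro V hV
    rw [Finset.mem_singleton] at hV
    subst hV
    exact ⟨⟨m, by simp⟩, Finset.Subset.rfl⟩
  · intro i hi
    exact ⟨{m, j}, ⟨Finset.mem_singleton_self _, hi⟩, fun W hW => Finset.mem_singleton.mp hW.1⟩
  · intro V hV
    rw [Finset.mem_singleton] at hV
    subst hV
    exact Finset.card_pair hmj

lemma blocks_sub_or {S : Finset (Fin n)} {m j : Fin n}
    (hmin : ∀ x ∈ S, m ≤ x) (hmj : m < j) {π : Finset (Finset (Fin n))}
    (hπ : π ∈ ncpp S) (hmjπ : ({m, j} : Finset (Fin n)) ∈ π)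
    {V : Finset (Fin n)} (hV : V ∈ π) (hVne : V ≠ {m, j}) :
    V ⊆ S.filter (fun x => m < x ∧ x < j) ∨ V ⊆ S.filter (fun x => j < x) := by
  obtain ⟨⟨hpart, hcard2⟩, hnc⟩ := mem_ncpp.mp hπ
  obtain ⟨a, b, hab, rfl⟩ := pair_of_card_two (hcard2 V hV)
  have haS : a ∈ S := (hpart.1 _ hV).2 (by simp)
  have hbS : b ∈ S := (hpart.1 _ hV).2 (by simp)
  have hmV : m ∉ ({a, b} : Finset (Fin n)) :=
    fun h => hVne (block_unique hpart hV hmjπ h (by simp))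
  have hjV : j ∉ ({a, b} : Finset (Fin n)) :=
    fun h => hVne (block_unique hpart hV hmjπ h (by simp))
  have hma : m < a := lt_of_le_of_ne (hmin a haS) (fun h => hmV (by simp [h]))
  have hmb : m < b := lt_of_le_of_ne (hmin b hbS) (fun h => hmV (by simp [h]))
  have haj : a ≠ j := fun h => hjV (by simp [h])
  have hbj : b ≠ j := fun h => hjV (by simp [h])
  have hnc' : ¬ CrossSym ({m, j} : Finset (Fin n)) {a, b} :=
    hnc _ hmjπ _ hV (fun h => hVne h.symm)
  rw [crossSym_pair_iff hmj hab] at hnc'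
  rcases lt_or_gt_of_ne haj with h1 | h1
  · left
    have hb : b < j := by
      by_contra hb'
      exact hnc' (Or.inl ⟨hma, h1, lt_of_le_of_ne (not_lt.mp hb') (Ne.symm hbj)⟩)
    intro x hx
    simp only [Finset.mem_insert, Finset.mem_singleton] at hx
    rcases hx with rfl | rfl
    · exact Finset.mem_filter.mpr ⟨haS, hma, h1⟩
    · exact Finset.mem_filter.mpr ⟨hbS, hmb, hb⟩
  · right
    intro x hx
    simp only [Finset.mem_insert, Finset.mem_singleton] at hx
    rcases hx with rfl | rfl
    · exact Finset.mem_filter.mpr ⟨haS, h1⟩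
    · exact Finset.mem_filter.mpr ⟨hbS, h1.trans hab⟩

lemma fiber_card {S : Finset (Fin n)} {m j : Fin n}
    (hmS : m ∈ S) (hmin : ∀ x ∈ S, m ≤ x) (hjS : j ∈ S) (hmj : m < j) :
    ((ncpp S).filter (fun π => ({m, j} : Finset (Fin n)) ∈ π)).card
      = (ncpp (S.filter (fun x => m < x ∧ x < j))).card
        * (ncpp (S.filter (fun x => j < x))).card := by
  set A := S.filter (fun x => m < x ∧ x < j) with hA
  set B := S.filter (fun x => j < x) with hB
  have hmA : m ∉ A := by simp [hA]
  have hjA : j ∉ A := by simp [hA]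
  have hmB : m ∉ B := by simp [hB, hmj.asymm]
  have hjB : j ∉ B := by simp [hB]
  have hAS : A ⊆ S := Finset.filter_subset _ _
  have hBS : B ⊆ S := Finset.filter_subset _ _
  have hAB : Disjoint A B := by
    rw [Finset.disjoint_left]
    intro x hx hx'
    exact absurd ((Finset.mem_filter.mp hx).2.2.trans (Finset.mem_filter.mp hx').2)
      (lt_irrefl _)
  have hpairA : Disjoint ({m, j} : Finset (Fin n)) (A ∪ B) := by
    rw [Finset.disjoint_left]
    intro x hx hx'
    simp only [Finset.mem_insert, Finset.mem_singleton] at hx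
    rcases Finset.mem_union.mp hx' with h | h <;> rcases hx with rfl | rfl <;> tauto
  have hSdecomp : S = ({m, j} : Finset (Fin n)) ∪ (A ∪ B) := by
    ext x
    simp only [Finset.mem_union, Finset.mem_insert, Finset.mem_singleton, hA, hB,
      Finset.mem_filter]
    constructor
    · intro hx
      rcases eq_or_lt_of_le (hmin x hx) with h | h
      · exact Or.inl (Or.inl h.symm)
      · rcases lt_trichotomy x j with h' | h' | h'
        · exact Or.inr (Or.inl ⟨hx, h, h'⟩)
        · exact Or.inl (Or.inr h')
        · exact Or.inr (Or.inr ⟨hx, h'⟩)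
    · rintro ((rfl | rfl) | (⟨h, _⟩ | ⟨h, _⟩)) <;> first | exact hmS | exact hjS | exact h
  rw [← Finset.card_product]
  refine Finset.card_bij' (fun π _ => (π.filter (· ⊆ A), π.filter (· ⊆ B)))
    (fun q _ => insert ({m, j} : Finset (Fin n)) (q.1 ∪ q.2)) ?_ ?_ ?_ ?_
  · -- forward maps into product
    intro π hπ
    obtain ⟨hπ, hmjπ⟩ := Finset.mem_filter.mp hπ
    rw [Finset.mem_product]
    constructor
    · refine restrict_mem_ncpp hπ hAS ?_
      intro V hV
      by_cases hVe : V = {m, j}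
      · subst hVe
        refine Or.inr (Finset.disjoint_left.mpr ?_)
        intro x hx
        simp only [Finset.mem_insert, Finset.mem_singleton] at hx
        rcases hx with rfl | rfl
        · exact hmA
        · exact hjA
      · rcases blocks_sub_or hmin hmj hπ hmjπ hV hVe with h | h
        · exact Or.inl h
        · exact Or.inr (hAB.symm.mono_left h)
    · refine restrict_mem_ncpp hπ hBS ?_
      intro V hV
      by_cases hVe : V = {m, j}
      · subst hVe
        refine Or.inr (Finset.disjoint_left.mpr ?_)
        intro x hx
        simp only [Finset.mem_insert, Finset.mem_singleton] at hx
        rcases hx with rfl | rfl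
        · exact hmB
        · exact hjB
      · rcases blocks_sub_or hmin hmj hπ hmjπ hV hVe with h | h
        · exact Or.inr (hAB.mono_left h)
        · exact Or.inl h
  · -- backward maps into fiber
    rintro ⟨π₁, π₂⟩ hq
    rw [Finset.mem_product] at hq
    obtain ⟨h1, h2⟩ := hq
    obtain ⟨h1p, h1nc⟩ := mem_ncpp.mp h1
    obtain ⟨h2p, h2nc⟩ := mem_ncpp.mp h2
    have hABp : IsPairPartitionOn (A ∪ B) (π₁ ∪ π₂) := isPairPartitionOn_union h1p h2p hAB
    have hfull : IsPairPartitionOn S (insert ({m, j} : Finset (Fin n)) (π₁ ∪ π₂)) := by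
      rw [hSdecomp, Finset.insert_eq]
      exact isPairPartitionOn_union ⟨⟨fun V hV => ((single_pair_partition hmj.ne).1.1 V hV),
        (single_pair_partition hmj.ne).1.2⟩, (single_pair_partition hmj.ne).2⟩ hABp hpairA
    have hsubA : ∀ V ∈ π₁, ∀ x ∈ V, m < x ∧ x < j := by
      intro V hV x hx
      have := (h1p.1.1 V hV).2 hx
      exact (Finset.mem_filter.mp this).2
    have hsubB : ∀ V ∈ π₂, ∀ x ∈ V, j < x := by
      intro V hV x hx
      have := (h2p.1.1 V hV).2 hx
      exact (Finset.mem_filter.mp this).2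
    refine Finset.mem_filter.mpr ⟨mem_ncpp.mpr ⟨hfull, ?_⟩, Finset.mem_insert_self _ _⟩
    intro V hV W hW hVW
    rw [Finset.mem_insert] at hV hW
    rcases hV with rfl | hV <;> rcases hW with rfl | hW
    · exact absurd rfl hVW
    · rcases Finset.mem_union.mp hW with hW | hW
      · exact not_crossSym_pair_of_nested (hsubA W hW)
      · refine not_crossSym_of_separated ?_
        intro v hv w hw
        simp only [Finset.mem_insert, Finset.mem_singleton] at hv
        rcases hv with rfl | rfl
        · exact hmj.trans (hsubB W hW w hw)
        · exact hsubB W hW w hw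
    · rcases Finset.mem_union.mp hV with hV | hV
      · exact fun hc => not_crossSym_pair_of_nested (hsubA V hV) hc.symm
      · refine fun hc => not_crossSym_of_separated ?_ hc.symm
        intro v hv w hw
        simp only [Finset.mem_insert, Finset.mem_singleton] at hv
        rcases hv with rfl | rfl
        · exact hmj.trans (hsubB V hV w hw)
        · exact hsubB V hV w hw
    · rcases Finset.mem_union.mp hV with hV | hV <;> rcases Finset.mem_union.mp hW with hW | hW
      · exact h1nc V hV W hW hVW
      · exact not_crossSym_of_separated
          (fun v hv w hw => ((hsubA V hV v hv).2.trans (hsubB W hW w hw)))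
      · exact fun hc => not_crossSym_of_separated
          (fun v hv w hw => ((hsubA W hW v hv).2.trans (hsubB V hV w hw))) hc.symm
      · exact h2nc V hV W hW hVW
  · -- left inverse
    intro π hπ
    obtain ⟨hπ', hmjπ⟩ := Finset.mem_filter.mp hπ
    obtain ⟨⟨hpart, _⟩, _⟩ := mem_ncpp.mp hπ'
    ext V
    · simp only [Finset.mem_insert, Finset.mem_union, Finset.mem_filter]
      constructor
      · rintro (rfl | ⟨hV, _⟩ | ⟨hV, _⟩) <;> first | exact hmjπ | exact hV
      · intro hV
        by_cases hVe : V = {m, j}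
        · exact Or.inl hVe
        · rcases blocks_sub_or hmin hmj hπ' hmjπ hV hVe with h | h
          · exact Or.inr (Or.inl ⟨hV, h⟩)
          · exact Or.inr (Or.inr ⟨hV, h⟩)
  · -- right inverse
    rintro ⟨π₁, π₂⟩ hq
    rw [Finset.mem_product] at hq
    obtain ⟨h1, h2⟩ := hq
    obtain ⟨h1p, _⟩ := mem_ncpp.mp h1
    obtain ⟨h2p, _⟩ := mem_ncpp.mp h2
    have e1 : (insert ({m, j} : Finset (Fin n)) (π₁ ∪ π₂)).filter (· ⊆ A) = π₁ := by
      ext V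
      simp only [Finset.mem_filter, Finset.mem_insert, Finset.mem_union]
      constructor
      · rintro ⟨rfl | hV | hV, hVA⟩
        · exact absurd (hVA (by simp)) hmA
        · exact hV
        · obtain ⟨x, hx⟩ := (h2p.1.1 V hV).1
          exact absurd (hVA hx) (Finset.disjoint_right.mp hAB ((h2p.1.1 V hV).2 hx))
      · intro hV
        exact ⟨Or.inr (Or.inl hV), (h1p.1.1 V hV).2⟩
    have e2 : (insert ({m, j} : Finset (Fin n)) (π₁ ∪ π₂)).filter (· ⊆ B) = π₂ := by
      ext V
      simp only [Finset.mem_filter, Finset.mem_insert, Finset.mem_union]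
      constructor
      · rintro ⟨rfl | hV | hV, hVB⟩
        · exact absurd (hVB (by simp)) hmB
        · obtain ⟨x, hx⟩ := (h1p.1.1 V hV).1
          exact absurd (hVB hx) (Finset.disjoint_left.mp hAB ((h1p.1.1 V hV).2 hx))
        · exact hV
      · intro hV
        exact ⟨Or.inr (Or.inr hV), (h2p.1.1 V hV).2⟩
    rw [Prod.mk.injEq]
    exact ⟨e1, e2⟩

end Fiber


section CatalanCount

lemma ncpp_card : ∀ (l : ℕ) {n : ℕ} (S : Finset (Fin n)), S.card = 2 * l →
    (ncpp S).card = catalan l := by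
  intro l
  induction l using Nat.strong_induction_on with
  | _ l IH =>
    intro n S hcard
    match l, IH with
    | 0, _ =>
      rw [ncpp_empty_eq (Finset.card_eq_zero.mp (by omega))]
      simp
    | l' + 1, IH =>
      have hS2 : S.card = 2 * l' + 2 := by omega
      have hne : S.Nonempty := Finset.card_pos.mp (by omega)
      set m := S.min' hne with hm
      have hmS : m ∈ S := S.min'_mem hne
      have hmin : ∀ x ∈ S, m ≤ x := fun x hx => S.min'_le x hx
      set e := S.orderIsoOfFin hS2 with he
      set z : Fin (2 * l' + 2) := ⟨0, by omega⟩ with hzdef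
      have hez : ((e z : S) : Fin n) = m := by
        refine le_antisymm ?_ (hmin _ (e z).2)
        have h1 : e z ≤ ⟨m, hmS⟩ := by
          have := e.monotone (show z ≤ e.symm ⟨m, hmS⟩ by
            simp [hzdef, Fin.le_def])
          simpa using this
        exact Subtype.coe_le_coe.mpr h1
      have hpartner : ∀ π ∈ ncpp S, ∃ j ∈ S.filter (fun j => m < j),
          ({m, j} : Finset (Fin n)) ∈ π := by
        intro π hπ
        obtain ⟨⟨hpart, hc2⟩, _⟩ := mem_ncpp.mp hπ
        obtain ⟨V, ⟨hV, hmV⟩, _⟩ := hpart.2 m hmS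
        obtain ⟨a, b, hab, rfl⟩ := pair_of_card_two (hc2 V hV)
        have haS : a ∈ S := (hpart.1 _ hV).2 (by simp)
        have hbS : b ∈ S := (hpart.1 _ hV).2 (by simp)
        simp only [Finset.mem_insert, Finset.mem_singleton] at hmV
        rcases hmV with rfl | rfl
        · exact ⟨b, Finset.mem_filter.mpr ⟨hbS, hab⟩, hV⟩
        · exact absurd (hmin a haS) (not_le.mpr hab)
      have hdecomp : ncpp S = (S.filter (fun j => m < j)).biUnion
          (fun j => (ncpp S).filter (fun π => ({m, j} : Finset (Fin n)) ∈ π)) := by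
        ext π
        simp only [Finset.mem_biUnion, Finset.mem_filter]
        constructor
        · intro hπ
          obtain ⟨j, hj, hmj⟩ := hpartner π hπ
          obtain ⟨hj1, hj2⟩ := Finset.mem_filter.mp hj
          exact ⟨j, ⟨hj1, hj2⟩, hπ, hmj⟩
        · rintro ⟨j, _, hπ, _⟩
          exact hπ
      have hdisj : ∀ j ∈ S.filter (fun j => m < j), ∀ j' ∈ S.filter (fun j => m < j),
          j ≠ j' → Disjoint ((ncpp S).filter (fun π => ({m, j} : Finset (Fin n)) ∈ π))
            ((ncpp S).filter (fun π => ({m, j'} : Finset (Fin n)) ∈ π)) := by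
        intro j hj j' hj' hjj'
        rw [Finset.disjoint_left]
        intro π hπ hπ'
        obtain ⟨hπ1, hj1⟩ := Finset.mem_filter.mp hπ
        obtain ⟨_, hj2⟩ := Finset.mem_filter.mp hπ'
        have hbe := block_unique (mem_ncpp.mp hπ1).1.1 hj1 hj2
          (Finset.mem_insert_self m {j}) (Finset.mem_insert_self m {j'})
        apply hjj'
        have hj3 : j ∈ ({m, j'} : Finset (Fin n)) := hbe ▸ (by simp)
        simp only [Finset.mem_insert, Finset.mem_singleton] at hj3
        rcases hj3 with rfl | rfl
        · exact absurd (Finset.mem_filter.mp hj).2 (lt_irrefl _)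
        · rfl
      have hfib : ∀ j ∈ S.filter (fun j => m < j),
          ((ncpp S).filter (fun π => ({m, j} : Finset (Fin n)) ∈ π)).card
            = (ncpp (S.filter (fun x => m < x ∧ x < j))).card
              * (ncpp (S.filter (fun x => j < x))).card := by
        intro j hj
        obtain ⟨hj1, hj2⟩ := Finset.mem_filter.mp hj
        exact fiber_card hmS hmin hj1 hj2
      have hInCard : ∀ k : Fin (2 * l' + 2),
          (S.filter (fun x => m < x ∧ x < ((e k : S) : Fin n))).card = (k : ℕ) - 1 := by
        intro k
        have hbij : (S.filter (fun x => m < x ∧ x < ((e k : S) : Fin n))).card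
            = (Finset.Ioo z k).card := by
          refine Finset.card_bij' (fun x hx => e.symm ⟨x, (Finset.mem_filter.mp hx).1⟩)
            (fun t _ => ((e t : S) : Fin n)) ?_ ?_ ?_ ?_
          · intro x hx
            obtain ⟨hxS, hmx, hxk⟩ := Finset.mem_filter.mp hx
            rw [Finset.mem_Ioo]
            constructor
            · have h1 : e z < ⟨x, hxS⟩ := Subtype.coe_lt_coe.mp (by rw [hez]; exact hmx)
              simpa using e.symm.lt_iff_lt.mpr h1
            · have h1 : (⟨x, hxS⟩ : S) < e k := Subtype.coe_lt_coe.mp hxk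
              simpa using e.symm.lt_iff_lt.mpr h1
          · intro t ht
            rw [Finset.mem_Ioo] at ht
            refine Finset.mem_filter.mpr ⟨(e t).2, ?_, ?_⟩
            · rw [← hez]
              exact Subtype.coe_lt_coe.mpr (e.strictMono ht.1)
            · exact Subtype.coe_lt_coe.mpr (e.strictMono ht.2)
          · intro x hx
            simp
          · intro t ht
            simp
        rw [hbij, Fin.card_Ioo]
        simp [hzdef]
      have hOutCard : ∀ k : Fin (2 * l' + 2),
          (S.filter (fun x => ((e k : S) : Fin n) < x)).card = 2 * l' + 1 - (k : ℕ) := by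
        intro k
        have hbij : (S.filter (fun x => ((e k : S) : Fin n) < x)).card
            = (Finset.Ioi k).card := by
          refine Finset.card_bij' (fun x hx => e.symm ⟨x, (Finset.mem_filter.mp hx).1⟩)
            (fun t _ => ((e t : S) : Fin n)) ?_ ?_ ?_ ?_
          · intro x hx
            obtain ⟨hxS, hkx⟩ := Finset.mem_filter.mp hx
            rw [Finset.mem_Ioi]
            have h1 : e k < ⟨x, hxS⟩ := Subtype.coe_lt_coe.mp hkx
            simpa using e.symm.lt_iff_lt.mpr h1
          · intro t ht
            rw [Finset.mem_Ioi] at ht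
            exact Finset.mem_filter.mpr ⟨(e t).2, Subtype.coe_lt_coe.mpr (e.strictMono ht)⟩
          · intro x hx
            simp
          · intro t ht
            simp
        rw [hbij, Fin.card_Ioi]
        omega
      have himg : S.filter (fun j => m < j)
          = (Finset.Ioi z).image (fun k => ((e k : S) : Fin n)) := by
        ext j
        simp only [Finset.mem_filter, Finset.mem_image, Finset.mem_Ioi]
        constructor
        · rintro ⟨hjS, hmj⟩
          refine ⟨e.symm ⟨j, hjS⟩, ?_, by simp⟩
          rw [show z = e.symm (e z) by simp]
          exact e.symm.lt_iff_lt.mpr (Subtype.coe_lt_coe.mp (by rw [hez]; exact hmj))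
        · rintro ⟨k, hk, rfl⟩
          exact ⟨(e k).2, by rw [← hez]; exact Subtype.coe_lt_coe.mpr (e.strictMono hk)⟩
      rw [hdecomp, Finset.card_biUnion hdisj]
      refine Eq.trans (Finset.sum_congr rfl hfib) ?_
      rw [himg, Finset.sum_image
        (fun k _ k' _ h => e.injective (Subtype.coe_injective h))]
      set ι : ℕ → Fin (2 * l' + 2) :=
        fun i => ⟨(2 * i + 1) % (2 * l' + 2), Nat.mod_lt _ (by omega)⟩ with hι
      have hιval : ∀ i, i < l' + 1 → ((ι i : Fin (2 * l' + 2)) : ℕ) = 2 * i + 1 := by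
        intro i hi
        simp only [hι]
        exact Nat.mod_eq_of_lt (by omega)
      have hsub : (Finset.range (l' + 1)).image ι ⊆ Finset.Ioi z := by
        intro k hk
        obtain ⟨i, hi, rfl⟩ := Finset.mem_image.mp hk
        rw [Finset.mem_Ioi]
        have h1 := hιval i (Finset.mem_range.mp hi)
        have hz0 : (z : ℕ) = 0 := rfl
        rw [Fin.lt_def]
        omega
      have hzero : ∀ k ∈ Finset.Ioi z, k ∉ (Finset.range (l' + 1)).image ι →
          (ncpp (S.filter (fun x => m < x ∧ x < ((e k : S) : Fin n)))).card
            * (ncpp (S.filter (fun x => ((e k : S) : Fin n) < x))).card = 0 := by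
        intro k hk hk'
        have hk0 : 0 < (k : ℕ) := by
          have := Finset.mem_Ioi.mp hk
          have hz0 : (z : ℕ) = 0 := rfl
          rw [Fin.lt_def] at this
          omega
        have hk2 : (k : ℕ) < 2 * l' + 2 := k.isLt
        by_cases hpar : (k : ℕ) % 2 = 1
        · exfalso
          apply hk'
          refine Finset.mem_image.mpr ⟨((k : ℕ) - 1) / 2, Finset.mem_range.mpr (by omega), ?_⟩
          apply Fin.ext
          have hkk : 2 * (((k : ℕ) - 1) / 2) + 1 = (k : ℕ) := by omega
          show (2 * (((k : ℕ) - 1) / 2) + 1) % (2 * l' + 2) = (k : ℕ)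
          rw [hkk]
          exact Nat.mod_eq_of_lt hk2
        · rw [ncpp_eq_empty_of_odd (by rw [hInCard]; omega), Finset.card_empty, Nat.zero_mul]
      have hinj : ∀ i ∈ Finset.range (l' + 1), ∀ i' ∈ Finset.range (l' + 1),
          ι i = ι i' → i = i' := by
        intro i hi i' hi' h
        have h1 := hιval i (Finset.mem_range.mp hi)
        have h2 := hιval i' (Finset.mem_range.mp hi')
        have := congrArg Fin.val h
        omega
      have hsum : ∑ i ∈ Finset.range (l' + 1), catalan i * catalan (l' - i)
          = catalan (l' + 1) := by
        rw [catalan_succ l']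
        exact (Fin.sum_univ_eq_sum_range (fun i => catalan i * catalan (l' - i)) (l' + 1)).symm
      rw [← Finset.sum_subset hsub hzero, Finset.sum_image hinj, ← hsum]
      refine Finset.sum_congr rfl ?_
      intro i hi
      have hi' : i < l' + 1 := Finset.mem_range.mp hi
      rw [IH i (by omega) _ (by rw [hInCard, hιval i hi']; omega),
        IH (l' - i) (by omega) _ (by rw [hOutCard, hιval i hi']; omega)]

end CatalanCount


section Colorings

variable {n : ℕ}

noncomputable def properSplits {n : ℕ} (π : Finset (Finset (Fin n))) :
    Finset (Finset (Finset (Fin n))) :=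
  π.powerset.filter (fun A => NoncrossingPart A ∧ NoncrossingPart (π \ A))

lemma mem_properSplits {π A : Finset (Finset (Fin n))} :
    A ∈ properSplits π ↔ A ⊆ π ∧ NoncrossingPart A ∧ NoncrossingPart (π \ A) := by
  simp [properSplits]

lemma reach_const {V : Type*} {G : SimpleGraph V} {β : Type*} (f : V → β)
    (h : ∀ v w, G.Adj v w → f v = f w) {v w : V} (hr : G.Reachable v w) : f v = f w := by
  obtain ⟨p⟩ := hr
  induction p with
  | nil => rfl
  | cons ha _ ih => exact (h _ _ ha).trans ih

lemma properSplits_card {π : Finset (Finset (Fin n))} (hbip : IsBipartitePart π) :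
    (properSplits π).card = 2 ^ ccCount π := by
  obtain ⟨c₀⟩ := hbip
  set G := interGraph π with hG
  have hFin : Fintype G.ConnectedComponent := Fintype.ofFinite _
  set χ : {V // V ∈ π} → Bool := fun V => decide (c₀ V = 1) with hχdef
  have hχ : ∀ {V W : {V // V ∈ π}}, G.Adj V W → χ V ≠ χ W := by
    intro V W hVW h
    apply c₀.valid hVW
    have hh : ∀ a b : Fin 2, decide (a = 1) = decide (b = 1) → a = b := by decide
    exact hh _ _ h
  set f : Finset (Finset (Fin n)) → {V // V ∈ π} → Bool :=
    fun A V => xor (decide (V.1 ∈ A)) (χ V) with hfdef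
  have hconst : ∀ A ∈ properSplits π, ∀ V W : {V // V ∈ π}, G.Adj V W → f A V = f A W := by
    intro A hA V W hVW
    obtain ⟨hAsub, hncA, hncB⟩ := mem_properSplits.mp hA
    have hne : V.1 ≠ W.1 := fun h => hVW.1 (Subtype.ext h)
    have hcross : CrossSym V.1 W.1 := hVW.2
    have hmem : (V.1 ∈ A) ↔ ¬ (W.1 ∈ A) := by
      constructor
      · intro h1 h2
        exact hncA V.1 h1 W.1 h2 hne hcross
      · intro h2
        by_contra h1
        exact hncB V.1 (Finset.mem_sdiff.mpr ⟨V.2, h1⟩) W.1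
          (Finset.mem_sdiff.mpr ⟨W.2, h2⟩) hne hcross
    have hχVW : χ V ≠ χ W := hχ hVW
    by_cases hVA : V.1 ∈ A <;> by_cases hWA : W.1 ∈ A
    · exact absurd hWA (hmem.mp hVA)
    · simp only [hfdef]
      cases hcv : χ V <;> cases hcw : χ W <;> simp_all [hVA, hWA] <;>
        exact hχ _ _ _ _ hVW (by simp [hcv, hcw])
    · simp only [hfdef]
      cases hcv : χ V <;> cases hcw : χ W <;> simp_all [hVA, hWA] <;>
        exact hχ _ _ _ _ hVW (by simp [hcv, hcw])
    · exact absurd (hmem.mpr hWA) hVA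
  set Aset : (G.ConnectedComponent → Bool) → Finset (Finset (Fin n)) :=
    fun g => (π.attach.filter
      (fun V => xor (g (G.connectedComponentMk V)) (χ V) = true)).image Subtype.val
    with hAdef
  have hmemA : ∀ (g : G.ConnectedComponent → Bool) (V : {V // V ∈ π}),
      V.1 ∈ Aset g ↔ xor (g (G.connectedComponentMk V)) (χ V) = true := by
    intro g V
    simp only [hAdef, Finset.mem_image, Finset.mem_filter, Finset.mem_attach, true_and]
    constructor
    · rintro ⟨W, hW, hWV⟩
      have hWV' : W = V := Subtype.ext hWV
      rwa [hWV'] at hW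
    · intro h
      exact ⟨V, h, rfl⟩
  have hAsub : ∀ g, Aset g ⊆ π := by
    intro g x hx
    obtain ⟨W, _, rfl⟩ := Finset.mem_image.mp hx
    exact W.2
  have hAmem : ∀ g, Aset g ∈ properSplits π := by
    intro g
    refine mem_properSplits.mpr ⟨hAsub g, ?_, ?_⟩
    · intro V hV W hW hVW hcross
      have hVπ : V ∈ π := hAsub g hV
      have hWπ : W ∈ π := hAsub g hW
      have hadj : G.Adj ⟨V, hVπ⟩ ⟨W, hWπ⟩ := ⟨fun h => hVW (congrArg Subtype.val h), hcross⟩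
      have hcc : G.connectedComponentMk ⟨V, hVπ⟩ = G.connectedComponentMk ⟨W, hWπ⟩ :=
        SimpleGraph.ConnectedComponent.sound hadj.reachable
      have h1 := (hmemA g ⟨V, hVπ⟩).mp hV
      have h2 := (hmemA g ⟨W, hWπ⟩).mp hW
      have h3 := hχ hadj
      rw [hcc] at h1
      cases hg : g (G.connectedComponentMk ⟨W, hWπ⟩) <;> rw [hg] at h1 h2 <;> simp_all
    · intro V hV W hW hVW hcross
      obtain ⟨hVπ, hVA⟩ := Finset.mem_sdiff.mp hV
      obtain ⟨hWπ, hWA⟩ := Finset.mem_sdiff.mp hW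
      have hadj : G.Adj ⟨V, hVπ⟩ ⟨W, hWπ⟩ := ⟨fun h => hVW (congrArg Subtype.val h), hcross⟩
      have hcc : G.connectedComponentMk ⟨V, hVπ⟩ = G.connectedComponentMk ⟨W, hWπ⟩ :=
        SimpleGraph.ConnectedComponent.sound hadj.reachable
      have h1 : ¬ _ := fun h => hVA ((hmemA g ⟨V, hVπ⟩).mpr h)
      have h2 : ¬ _ := fun h => hWA ((hmemA g ⟨W, hWπ⟩).mpr h)
      have h3 := hχ hadj
      rw [hcc] at h1
      cases hg : g (G.connectedComponentMk ⟨W, hWπ⟩) <;> rw [hg] at h1 h2 <;> simp_all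
  let E : {A // A ∈ properSplits π} ≃ (G.ConnectedComponent → Bool) :=
    { toFun := fun A => SimpleGraph.ConnectedComponent.lift (f A.1)
        (fun v w p _ => reach_const (f A.1) (hconst A.1 A.2) ⟨p⟩)
      invFun := fun g => ⟨Aset g, hAmem g⟩
      left_inv := by
        rintro ⟨A, hA⟩
        apply Subtype.ext
        ext V
        simp only []
        constructor
        · intro hV
          have hVπ : V ∈ π := hAsub _ hV
          have h1 := (hmemA _ ⟨V, hVπ⟩).mp hV
          rw [SimpleGraph.ConnectedComponent.lift_mk] at h1
          simp only [hfdef] at h1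
          by_contra hVA
          simp [hVA] at h1
        · intro hV
          have hVπ : V ∈ π := mem_properSplits.mp hA |>.1 hV
          refine (hmemA _ ⟨V, hVπ⟩).mpr ?_
          rw [SimpleGraph.ConnectedComponent.lift_mk]
          simp only [hfdef]
          simp [hV]
      right_inv := by
        intro g
        funext cc
        induction cc using SimpleGraph.ConnectedComponent.ind with
        | _ V =>
          simp only [SimpleGraph.ConnectedComponent.lift_mk, hfdef]
          have h1 := hmemA g V
          by_cases hV : V.1 ∈ Aset g
          · have h2 := h1.mp hV
            cases hg : g (G.connectedComponentMk V) <;> rw [hg] at h2 <;> simp_all [hV]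
          · have h2 : ¬ _ := fun h => hV (h1.mpr h)
            cases hg : g (G.connectedComponentMk V) <;> rw [hg] at h2 <;> simp_all [hV] }
  have hcard : (properSplits π).card = Fintype.card (G.ConnectedComponent → Bool) := by
    rw [← Fintype.card_coe (properSplits π)]
    exact Fintype.card_congr E
  rw [hcard, Fintype.card_fun, Fintype.card_bool, ccCount, Nat.card_eq_fintype_card]

end Colorings


section Assembly

variable {n : ℕ}

lemma isPairPartitionOn_sub {S : Finset (Fin n)} {π A : Finset (Finset (Fin n))}
    (h : IsPairPartitionOn S π) (hA : A ⊆ π) : IsPairPartitionOn (A.biUnion id) A := by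
  refine ⟨⟨?_, ?_⟩, ?_⟩
  · intro V hV
    exact ⟨(h.1.1 V (hA hV)).1, Finset.subset_biUnion_of_mem id hV⟩
  · intro i hi
    obtain ⟨V, hV, hiV⟩ := Finset.mem_biUnion.mp hi
    simp only [id] at hiV
    refine ⟨V, ⟨hV, hiV⟩, ?_⟩
    rintro W ⟨hW, hiW⟩
    exact block_unique h.1 (hA hW) (hA hV) hiW hiV
  · intro V hV
    exact h.2 V (hA hV)

lemma compl_biUnion {π A : Finset (Finset (Fin n))}
    (h : IsPairPartitionOn Finset.univ π) (hA : A ⊆ π) :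
    (π \ A).biUnion id = (A.biUnion id)ᶜ := by
  ext i
  simp only [Finset.mem_biUnion, Finset.mem_compl, id, not_exists]
  constructor
  · rintro ⟨V, hV, hiV⟩ W ⟨hW, hiW⟩
    exact (Finset.mem_sdiff.mp hV).2
      (by rw [block_unique h.1 (Finset.sdiff_subset hV) (hA hW) hiV hiW]; exact hW)
  · intro hi
    obtain ⟨V, ⟨hV, hiV⟩, _⟩ := h.1.2 i (Finset.mem_univ i)
    exact ⟨V, Finset.mem_sdiff.mpr ⟨hV, fun hVA => hi V ⟨hVA, hiV⟩⟩, hiV⟩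

lemma sigma_card (n : ℕ) :
    ∑ π ∈ biPairPartitions n, (properSplits π).card
      = ∑ S ∈ (Finset.univ : Finset (Fin n)).powerset, (ncpp S).card * (ncpp Sᶜ).card := by
  rw [← Finset.card_sigma]
  have hprod : ∀ S ∈ (Finset.univ : Finset (Fin n)).powerset,
      (ncpp S).card * (ncpp Sᶜ).card = (ncpp S ×ˢ ncpp Sᶜ).card :=
    fun S _ => (Finset.card_product _ _).symm
  rw [Finset.sum_congr rfl hprod, ← Finset.card_sigma]
  refine Finset.card_bij
    (fun x _ => (⟨x.2.biUnion id, (x.2, x.1 \ x.2)⟩ :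
      Σ _S : Finset (Fin n), Finset (Finset (Fin n)) × Finset (Finset (Fin n)))) ?_ ?_ ?_
  · rintro ⟨π, A⟩ hx
    rw [Finset.mem_sigma] at hx
    obtain ⟨hπ, hA⟩ := hx
    obtain ⟨hAsub, hncA, hncB⟩ := mem_properSplits.mp hA
    have hππ : IsPairPartition n π :=
      (Finset.mem_filter.mp (Finset.mem_filter.mp hπ).1).2
    rw [Finset.mem_sigma]
    constructor
    · exact Finset.mem_powerset.mpr (Finset.subset_univ _)
    · rw [Finset.mem_product]
      constructor
      · exact mem_ncpp.mpr ⟨isPairPartitionOn_sub hππ hAsub, hncA⟩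
      · refine mem_ncpp.mpr ⟨?_, hncB⟩
        have := isPairPartitionOn_sub hππ (Finset.sdiff_subset : π \ A ⊆ π)
        rwa [compl_biUnion hππ hAsub] at this
  · rintro ⟨π, A⟩ hx ⟨π', A'⟩ hy h
    rw [Finset.mem_sigma] at hx hy
    dsimp only at hx hy
    have hAsub := (mem_properSplits.mp hx.2).1
    have hAsub' := (mem_properSplits.mp hy.2).1
    injection h with hfst hsnd
    have h2 : (A, π \ A) = (A', π' \ A') := hsnd
    rw [Prod.ext_iff] at h2
    obtain ⟨hAA, hDD⟩ := h2
    dsimp only at hAA hDD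
    have hππ : π = π' := by
      rw [← Finset.union_sdiff_of_subset hAsub, ← Finset.union_sdiff_of_subset hAsub',
        hDD, hAA]
    subst hππ
    subst hAA
    rfl
  · rintro ⟨S, π₁, π₂⟩ hy
    rw [Finset.mem_sigma] at hy
    dsimp only at hy
    obtain ⟨hS, h12⟩ := hy
    rw [Finset.mem_product] at h12
    dsimp only at h12
    obtain ⟨h1, h2⟩ := h12
    obtain ⟨h1p, h1nc⟩ := mem_ncpp.mp h1
    obtain ⟨h2p, h2nc⟩ := mem_ncpp.mp h2
    have hdSS : Disjoint S Sᶜ := disjoint_compl_right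
    have hunion : IsPairPartitionOn Finset.univ (π₁ ∪ π₂) := by
      have := isPairPartitionOn_union h1p h2p hdSS
      rwa [Finset.union_compl] at this
    have hd12 : ∀ V ∈ π₂, V ∉ π₁ := fun V hV2 hV1 => disjoint_parts h1p h2p hdSS hV1 hV2
    have hsdiff : (π₁ ∪ π₂) \ π₁ = π₂ := by
      ext V
      simp only [Finset.mem_sdiff, Finset.mem_union]
      constructor
      · rintro ⟨hV | hV, hV1⟩
        · exact absurd hV hV1
        · exact hV
      · intro hV
        exact ⟨Or.inr hV, hd12 V hV⟩
    have hbip : IsBipartitePart (π₁ ∪ π₂) := by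
      refine ⟨SimpleGraph.Coloring.mk (fun V => if V.1 ∈ π₁ then 0 else 1) ?_⟩
      intro V W hVW
      have hcross : CrossSym V.1 W.1 := hVW.2
      have hne : V.1 ≠ W.1 := fun h => hVW.1 (Subtype.ext h)
      by_cases hV : V.1 ∈ π₁ <;> by_cases hW : W.1 ∈ π₁
      · exact absurd hcross (h1nc V.1 hV W.1 hW hne)
      · simp [hV, hW]
      · simp [hV, hW]
      · have hV2 : V.1 ∈ π₂ := (Finset.mem_union.mp V.2).resolve_left hV
        have hW2 : W.1 ∈ π₂ := (Finset.mem_union.mp W.2).resolve_left hW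
        exact absurd hcross (h2nc V.1 hV2 W.1 hW2 hne)
    refine ⟨⟨π₁ ∪ π₂, π₁⟩, ?_, ?_⟩
    · rw [Finset.mem_sigma]
      constructor
      · unfold biPairPartitions pairPartitions
        rw [Finset.mem_filter, Finset.mem_filter]
        exact ⟨⟨Finset.mem_univ _, hunion⟩, hbip⟩
      · refine mem_properSplits.mpr ⟨Finset.subset_union_left, h1nc, ?_⟩
        rw [hsdiff]
        exact h2nc
    · have hb1 : π₁.biUnion id = S := biUnion_blocks h1p.1
      dsimp only
      rw [hsdiff, hb1]

end Assembly

theorem sum_bipartite_pair_partitions (p : ℕ) (hp : 0 < p) :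
    ∑ π ∈ biPairPartitions (2 * p), 2 ^ ccCount π
      = ∑ l ∈ Finset.range (p + 1),
          Nat.choose (2 * p) (2 * l) * catalan l * catalan (p - l) := by
  have h1 : ∀ π ∈ biPairPartitions (2 * p), 2 ^ ccCount π = (properSplits π).card := by
    intro π hπ
    exact (properSplits_card (Finset.mem_filter.mp hπ).2).symm
  rw [Finset.sum_congr rfl h1, sigma_card (2 * p), Finset.sum_powerset, Finset.card_fin]
  have hsub : (Finset.range (p + 1)).image (fun l => 2 * l) ⊆ Finset.range (2 * p + 1) := by
    intro c hc
    obtain ⟨l, hl, rfl⟩ := Finset.mem_image.mp hc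
    rw [Finset.mem_range] at *
    omega
  have hzero : ∀ c ∈ Finset.range (2 * p + 1),
      c ∉ (Finset.range (p + 1)).image (fun l => 2 * l) →
      ∑ S ∈ Finset.powersetCard c (Finset.univ : Finset (Fin (2 * p))),
        (ncpp S).card * (ncpp Sᶜ).card = 0 := by
    intro c hc hc'
    have hodd : c % 2 = 1 := by
      by_contra h
      apply hc'
      have hcr := Finset.mem_range.mp hc
      exact Finset.mem_image.mpr ⟨c / 2, Finset.mem_range.mpr (by omega), by omega⟩
    refine Finset.sum_eq_zero ?_
    intro S hS
    have hSc : S.card = c := (Finset.mem_powersetCard.mp hS).2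
    rw [ncpp_eq_empty_of_odd (by omega), Finset.card_empty, Nat.zero_mul]
  rw [← Finset.sum_subset hsub hzero, Finset.sum_image (fun a _ b _ h => by omega)]
  refine Finset.sum_congr rfl ?_
  intro l hl
  have hl' : l < p + 1 := Finset.mem_range.mp hl
  have hpt : ∀ S ∈ Finset.powersetCard (2 * l) (Finset.univ : Finset (Fin (2 * p))),
      (ncpp S).card * (ncpp Sᶜ).card = catalan l * catalan (p - l) := by
    intro S hS
    have hSc : S.card = 2 * l := (Finset.mem_powersetCard.mp hS).2
    have hScc : Sᶜ.card = 2 * (p - l) := by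
      rw [Finset.card_compl, Fintype.card_fin, hSc]
      omega
    rw [ncpp_card l S hSc, ncpp_card (p - l) Sᶜ hScc]
  rw [Finset.sum_congr rfl hpt, Finset.sum_const, Finset.card_powersetCard, Finset.card_fin,
    smul_eq_mul, Nat.mul_assoc]
end

section
/- Let μ_1 denote the distribution of (x_1 + x_2)/√2 where x_1, x_2 are classically independent standard semicircle variables. Then the free cumulants of μ_1 satisfy: all odd free cumulants vanish, κ_2(μ_1) = 1, and for every even integer n ≥ 4, κ_n(μ_1) = 2·(1/2)^{n/2}·|P_2^{bicon}(n)|, where P_2^{bicon}(n) is the set of connected pair partitions of [n] whose intersection graph is bipartite. -/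
open Finset

/-- The moments of `μ₁`, the law of `(x₁+x₂)/√2` for independent standard
semicircle variables: odd moments vanish, `(2p)`-th moment is
`2^{-p} Σ_{π ∈ P₂^{bi}(2p)} 2^{cc(π)}`. -/
noncomputable def mu1Moment (p : ℕ) : ℝ :=
  if Odd p then 0
  else (1 / 2 : ℝ) ^ (p / 2) * ∑ π ∈ biPairPartitions p, (2 : ℝ) ^ ccCount π
open scoped Classical

section Basics
variable {n : ℕ}

lemma crosses_mono {A A' B B' : Finset (Fin n)} (hA : A ⊆ A') (hB : B ⊆ B')
    (h : Crosses A B) : Crosses A' B' := by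
  obtain ⟨i, k, j, l, h1, h2, h3, hi, hj, hk, hl⟩ := h
  exact ⟨i, k, j, l, h1, h2, h3, hA hi, hA hj, hB hk, hB hl⟩

lemma crossSym_mono {A A' B B' : Finset (Fin n)} (hA : A ⊆ A') (hB : B ⊆ B')
    (h : CrossSym A B) : CrossSym A' B' := by
  rcases h with h | h
  · exact Or.inl (crosses_mono hA hB h)
  · exact Or.inr (crosses_mono hB hA h)

lemma crossSym_comm {A B : Finset (Fin n)} : CrossSym A B ↔ CrossSym B A := Or.comm

/-- From a symmetric crossing, `B` has a point strictly between two points of `A`. -/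
lemma crossSym_between {A B : Finset (Fin n)} (h : CrossSym A B) :
    ∃ m ∈ B, ∃ p ∈ A, ∃ q ∈ A, p < m ∧ m < q := by
  rcases h with ⟨i, k, j, l, h1, h2, h3, hi, hj, hk, hl⟩ | ⟨i, k, j, l, h1, h2, h3, hi, hj, hk, hl⟩
  · exact ⟨k, hk, i, hi, j, hj, h1, h2⟩
  · exact ⟨j, hj, k, hk, l, hl, h2, h3⟩

lemma part_eq_of_mem {S : Finset (Fin n)} {π : Finset (Finset (Fin n))}
    (h : IsPartitionOn S π) {B B' : Finset (Fin n)} (hB : B ∈ π) (hB' : B' ∈ π)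
    {i : Fin n} (hiB : i ∈ B) (hiB' : i ∈ B') : B = B' := by
  have hiS : i ∈ S := (h.1 B hB).2 hiB
  obtain ⟨V, _, hV⟩ := h.2 i hiS
  rw [hV B ⟨hB, hiB⟩, hV B' ⟨hB', hiB'⟩]

lemma part_sum_card {S : Finset (Fin n)} {π : Finset (Finset (Fin n))}
    (h : IsPartitionOn S π) : ∑ B ∈ π, B.card = S.card := by
  have hS : S = π.biUnion id := by
    ext i
    simp only [mem_biUnion, id]
    constructor
    · intro hi
      obtain ⟨V, ⟨hV, hiV⟩, _⟩ := h.2 i hi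
      exact ⟨V, hV, hiV⟩
    · rintro ⟨V, hV, hiV⟩
      exact (h.1 V hV).2 hiV
  rw [hS, card_biUnion]
  · simp
  · intro x hx y hy hxy
    simp only [Function.onFun, id]
    rw [Finset.disjoint_left]
    intro a ha ha'
    exact hxy (part_eq_of_mem h hx hy ha ha')

end Basics
section Graphs
variable {n : ℕ}

/-- The point set of the connected component of block `B`. -/
noncomputable def ptset (π : Finset (Finset (Fin n))) (B : Finset (Fin n)) (hB : B ∈ π) :
    Finset (Fin n) :=
  Finset.univ.filter fun i : Fin n =>
    ∃ W, ∃ hW : W ∈ π, i ∈ W ∧ (interGraph π).Reachable ⟨B, hB⟩ ⟨W, hW⟩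

lemma mem_ptset {π : Finset (Finset (Fin n))} {B : Finset (Fin n)} {hB : B ∈ π} {i : Fin n} :
    i ∈ ptset π B hB ↔ ∃ W, ∃ hW : W ∈ π, i ∈ W ∧ (interGraph π).Reachable ⟨B, hB⟩ ⟨W, hW⟩ := by
  simp [ptset]

lemma mem_compPart {π : Finset (Finset (Fin n))} {V : Finset (Fin n)} :
    V ∈ compPart π ↔ ∃ B, ∃ hB : B ∈ π, V = ptset π B hB := by
  simp only [compPart, mem_image, mem_attach, true_and, ptset]
  constructor
  · rintro ⟨⟨B, hB⟩, h⟩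
    exact ⟨B, hB, h.symm⟩
  · rintro ⟨B, hB, h⟩
    exact ⟨⟨B, hB⟩, h.symm⟩

lemma subset_ptset_self {π : Finset (Finset (Fin n))} {B : Finset (Fin n)} (hB : B ∈ π) :
    B ⊆ ptset π B hB := by
  intro x hx
  exact mem_ptset.mpr ⟨B, hB, hx, SimpleGraph.Reachable.refl _⟩

/-- The embedding of the intersection graph of a sub-family. -/
def subEmb {π ρ : Finset (Finset (Fin n))} (hsub : ρ ⊆ π) :
    interGraph ρ ↪g interGraph π where
  toFun := fun v => ⟨v.1, hsub v.2⟩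
  inj' := by
    rintro ⟨a, ha⟩ ⟨b, hb⟩ h
    simpa [Subtype.ext_iff] using h
  map_rel_iff' := by
    rintro ⟨a, ha⟩ ⟨b, hb⟩
    show (_ ≠ _ ∧ CrossSym _ _) ↔ (_ ≠ _ ∧ CrossSym _ _)
    simp [Subtype.ext_iff]
    exact fun _ => Iff.rfl

lemma reach_lift {π ρ : Finset (Finset (Fin n))}
    (hcl : ∀ B ∈ ρ, ∀ C ∈ π, B ≠ C → CrossSym B C → C ∈ ρ) :
    ∀ {u v : {V // V ∈ π}} (_ : (interGraph π).Walk u v) (hu : u.1 ∈ ρ),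
      ∃ hv : v.1 ∈ ρ, (interGraph ρ).Reachable ⟨u.1, hu⟩ ⟨v.1, hv⟩ := by
  intro u v w
  induction w with
  | nil => exact fun hu => ⟨hu, SimpleGraph.Reachable.refl _⟩
  | cons h w ih =>
    intro hu
    rename_i a b c
    obtain ⟨hne, hcr⟩ := h
    have hne' : a.1 ≠ b.1 := fun hh => hne (Subtype.ext hh)
    have hb : b.1 ∈ ρ := hcl a.1 hu b.1 b.2 hne' hcr
    obtain ⟨hv, r⟩ := ih hb
    refine ⟨hv, SimpleGraph.Reachable.trans (SimpleGraph.Adj.reachable ?_) r⟩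
    refine ⟨?_, hcr⟩
    intro hh
    injection hh with hh2
    exact hne' hh2

end Graphs
section PtSet
variable {n : ℕ} {π : Finset (Finset (Fin n))}

lemma block_subset_ptset_iff (hpart : IsPartitionOn Finset.univ π)
    {B W : Finset (Fin n)} (hB : B ∈ π) (hW : W ∈ π) :
    W ⊆ ptset π B hB ↔ (interGraph π).Reachable ⟨B, hB⟩ ⟨W, hW⟩ := by
  constructor
  · intro hsub
    obtain ⟨x, hx⟩ := (hpart.1 W hW).1
    obtain ⟨W', hW', hxW', hr⟩ := mem_ptset.mp (hsub hx)
    have : W = W' := part_eq_of_mem hpart hW hW' hx hxW'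
    subst this
    exact hr
  · intro hr x hx
    exact mem_ptset.mpr ⟨W, hW, hx, hr⟩

lemma ptset_eq_iff (hpart : IsPartitionOn Finset.univ π)
    {B C : Finset (Fin n)} (hB : B ∈ π) (hC : C ∈ π) :
    ptset π B hB = ptset π C hC ↔ (interGraph π).Reachable ⟨B, hB⟩ ⟨C, hC⟩ := by
  constructor
  · intro h
    have := (block_subset_ptset_iff hpart hB hC).mp (h ▸ subset_ptset_self hC)
    exact this
  · intro hr
    ext x
    simp only [mem_ptset]
    constructor
    · rintro ⟨W, hW, hxW, hr'⟩
      exact ⟨W, hW, hxW, hr.symm.trans hr'⟩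
    · rintro ⟨W, hW, hxW, hr'⟩
      exact ⟨W, hW, hxW, hr.trans hr'⟩

lemma ptset_eq_of_mem (hpart : IsPartitionOn Finset.univ π)
    {B C : Finset (Fin n)} (hB : B ∈ π) (hC : C ∈ π) {x : Fin n}
    (hxB : x ∈ ptset π B hB) (hxC : x ∈ ptset π C hC) :
    ptset π B hB = ptset π C hC := by
  obtain ⟨W, hW, hxW, hr⟩ := mem_ptset.mp hxB
  obtain ⟨W', hW', hxW', hr'⟩ := mem_ptset.mp hxC
  have : W = W' := part_eq_of_mem hpart hW hW' hxW hxW'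
  subst this
  rw [ptset_eq_iff hpart]
  exact hr.trans hr'.symm

end PtSet
section NC
variable {n : ℕ} {π : Finset (Finset (Fin n))}

lemma walk_inside {x y : Fin n} {u₀ : {V // V ∈ π}}
    (H : ∀ C : {V // V ∈ π}, (interGraph π).Reachable u₀ C →
      (∀ z ∈ C.1, x < z ∧ z < y) ∨ (∀ z ∈ C.1, ¬(x < z ∧ z < y))) :
    ∀ {u v : {V // V ∈ π}}, (interGraph π).Walk u v →
      (interGraph π).Reachable u₀ u → (∀ z ∈ u.1, x < z ∧ z < y) →
      (∀ z ∈ v.1, x < z ∧ z < y) := by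
  intro u v w
  induction w with
  | nil => exact fun _ h => h
  | cons h w ih =>
    intro hr hins
    rename_i a b c
    have hrb : (interGraph π).Reachable u₀ b := hr.trans h.reachable
    refine ih hrb ?_
    rcases H b hrb with hb | hb
    · exact hb
    · exfalso
      obtain ⟨m, hm, p, hp, q, hq, hpm, hmq⟩ := crossSym_between h.2
      exact hb m hm ⟨lt_trans (hins p hp).1 hpm, lt_trans hmq (hins q hq).2⟩

lemma reach_inside {x y : Fin n} {u₀ : {V // V ∈ π}}
    (H : ∀ C : {V // V ∈ π}, (interGraph π).Reachable u₀ C →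
      (∀ z ∈ C.1, x < z ∧ z < y) ∨ (∀ z ∈ C.1, ¬(x < z ∧ z < y)))
    {u v : {V // V ∈ π}} (hu : (interGraph π).Reachable u₀ u)
    (r : (interGraph π).Reachable u v) (hins : ∀ z ∈ u.1, x < z ∧ z < y) :
    ∀ z ∈ v.1, x < z ∧ z < y := by
  obtain ⟨w⟩ := r
  exact walk_inside H w hu hins

lemma compPart_nocross_aux (hpart : IsPartitionOn Finset.univ π)
    {V W : Finset (Fin n)} (hV : V ∈ compPart π) (hW : W ∈ compPart π)
    (hne : V ≠ W) : ¬ Crosses V W := by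
  obtain ⟨B₀, hB₀, rfl⟩ := mem_compPart.mp hV
  obtain ⟨C₀, hC₀, rfl⟩ := mem_compPart.mp hW
  have hnr : ¬ (interGraph π).Reachable ⟨B₀, hB₀⟩ ⟨C₀, hC₀⟩ := fun h =>
    hne ((ptset_eq_iff hpart hB₀ hC₀).mpr h)
  have nomeet : ∀ (D : Finset (Fin n)) (hD : D ∈ π),
      (interGraph π).Reachable ⟨B₀, hB₀⟩ ⟨D, hD⟩ →
      (interGraph π).Reachable ⟨C₀, hC₀⟩ ⟨D, hD⟩ → False := by
    intro D hD h1 h2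
    exact hnr (h1.trans h2.symm)
  have nocross : ∀ (D : Finset (Fin n)) (hD : D ∈ π) (E : Finset (Fin n)) (hE : E ∈ π),
      (interGraph π).Reachable ⟨B₀, hB₀⟩ ⟨D, hD⟩ →
      (interGraph π).Reachable ⟨C₀, hC₀⟩ ⟨E, hE⟩ → ¬ CrossSym D E := by
    intro D hD E hE h1 h2 hcr
    by_cases hde : D = E
    · subst hde; exact nomeet D hD h1 h2
    · have : (interGraph π).Adj ⟨D, hD⟩ ⟨E, hE⟩ :=
        ⟨fun hh => hde (congrArg Subtype.val hh), hcr⟩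
      exact nomeet E hE (h1.trans this.reachable) h2
  have hdisj : ∀ z : Fin n, z ∈ ptset π B₀ hB₀ → z ∈ ptset π C₀ hC₀ → False := by
    intro z h1 h2
    obtain ⟨W1, hW1, hz1, hr1⟩ := mem_ptset.mp h1
    obtain ⟨W2, hW2, hz2, hr2⟩ := mem_ptset.mp h2
    have : W1 = W2 := part_eq_of_mem hpart hW1 hW2 hz1 hz2
    subst this
    exact nomeet W1 hW1 hr1 hr2
  rintro ⟨i, k, j, l, h1, h2, h3, hiV, hjV, hkW, hlW⟩
  obtain ⟨Bi, hBi, hiBi, hrBi⟩ := mem_ptset.mp hiV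
  obtain ⟨Bj, hBj, hjBj, hrBj⟩ := mem_ptset.mp hjV
  obtain ⟨Bk, hBk, hkBk, hrBk⟩ := mem_ptset.mp hkW
  obtain ⟨Bl, hBl, hlBl, hrBl⟩ := mem_ptset.mp hlW
  -- every block in the `C₀` component has its points in `W`
  have hinW : ∀ (E : Finset (Fin n)) (hE : E ∈ π),
      (interGraph π).Reachable ⟨C₀, hC₀⟩ ⟨E, hE⟩ → ∀ z ∈ E, z ∈ ptset π C₀ hC₀ :=
    fun E hE hr z hz => mem_ptset.mpr ⟨E, hE, hz, hr⟩
  have hinV : ∀ (D : Finset (Fin n)) (hD : D ∈ π),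
      (interGraph π).Reachable ⟨B₀, hB₀⟩ ⟨D, hD⟩ → ∀ z ∈ D, z ∈ ptset π B₀ hB₀ :=
    fun D hD hr z hz => mem_ptset.mpr ⟨D, hD, hz, hr⟩
  by_cases hb : ∃ (E : Finset (Fin n)) (hE : E ∈ π),
      (interGraph π).Reachable ⟨C₀, hC₀⟩ ⟨E, hE⟩ ∧
      ∃ x ∈ E, ∃ y ∈ E, (i < x ∧ x < j) ∧ ¬(i < y ∧ y < j)
  · obtain ⟨E, hE, hrE, x, hxE, y, hyE, hxin, hyout⟩ := hb
    have hxW : x ∈ ptset π C₀ hC₀ := hinW E hE hrE x hxE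
    have hyW : y ∈ ptset π C₀ hC₀ := hinW E hE hrE y hyE
    have hyi : y ≠ i := fun h => hdisj y (h ▸ hiV) hyW
    have hyj : y ≠ j := fun h => hdisj y (h ▸ hjV) hyW
    have hycase : y < i ∨ j < y := by
      rcases lt_trichotomy y i with h | h | h
      · exact Or.inl h
      · exact absurd h hyi
      · rcases lt_trichotomy y j with h' | h' | h'
        · exact (hyout ⟨h, h'⟩).elim
        · exact absurd h' hyj
        · exact Or.inr h'
    rcases hycase with hy | hy
    · -- separator (y, x) : contains i, not j
      have Hd : ∀ C : {V' // V' ∈ π}, (interGraph π).Reachable ⟨B₀, hB₀⟩ C →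
          (∀ z ∈ C.1, y < z ∧ z < x) ∨ (∀ z ∈ C.1, ¬(y < z ∧ z < x)) := by
        intro C hrC
        by_contra hcon
        push_neg at hcon
        obtain ⟨h1', h2'⟩ := hcon
        obtain ⟨v, hv, hvout⟩ := h1'
        obtain ⟨u, hu, huin⟩ := h2'
        -- u ∈ C inside (y,x), v ∈ C outside
        have hvV : v ∈ ptset π B₀ hB₀ := hinV C.1 C.2 hrC v hv
        have hvy : v ≠ y := fun h => hdisj v hvV (h ▸ hyW)
        have hvx : v ≠ x := fun h => hdisj v hvV (h ▸ hxW)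
        have : v < y ∨ x < v := by
          rcases lt_trichotomy v y with h | h | h
          · exact Or.inl h
          · exact absurd h hvy
          · rcases lt_trichotomy v x with h' | h' | h'
            · exact absurd (hvout h) (not_le.mpr h')
            · exact absurd h' hvx
            · exact Or.inr h'
        rcases this with hcase | hcase
        · exact nocross C.1 C.2 E hE hrC hrE
            (Or.inl ⟨v, y, u, x, hcase, huin.1, huin.2, hv, hu, hyE, hxE⟩)
        · exact nocross C.1 C.2 E hE hrC hrE
            (Or.inr ⟨y, u, x, v, huin.1, huin.2, hcase, hyE, hxE, hu, hv⟩)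
      -- Bi is inside (y,x), Bj is not
      have hBiIn : ∀ z ∈ Bi, y < z ∧ z < x := by
        rcases Hd ⟨Bi, hBi⟩ hrBi with h | h
        · exact h
        · exact (h i hiBi ⟨hy, hxin.1⟩).elim
      have hBjIn : ∀ z ∈ Bj, y < z ∧ z < x := by
        exact reach_inside Hd hrBi (hrBi.symm.trans hrBj) hBiIn
      have := (hBjIn j hjBj).2
      exact absurd this (not_lt.mpr (le_of_lt hxin.2))
    · -- y > j, separator (x, y) : contains j, not i
      have Hd : ∀ C : {V' // V' ∈ π}, (interGraph π).Reachable ⟨B₀, hB₀⟩ C →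
          (∀ z ∈ C.1, x < z ∧ z < y) ∨ (∀ z ∈ C.1, ¬(x < z ∧ z < y)) := by
        intro C hrC
        by_contra hcon
        push_neg at hcon
        obtain ⟨h1', h2'⟩ := hcon
        obtain ⟨v, hv, hvout⟩ := h1'
        obtain ⟨u, hu, huin⟩ := h2'
        have hvV : v ∈ ptset π B₀ hB₀ := hinV C.1 C.2 hrC v hv
        have hvy : v ≠ y := fun h => hdisj v hvV (h ▸ hyW)
        have hvx : v ≠ x := fun h => hdisj v hvV (h ▸ hxW)
        have : v < x ∨ y < v := by
          rcases lt_trichotomy v x with h | h | h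
          · exact Or.inl h
          · exact absurd h hvx
          · rcases lt_trichotomy v y with h' | h' | h'
            · exact absurd (hvout h) (not_le.mpr h')
            · exact absurd h' hvy
            · exact Or.inr h'
        rcases this with hcase | hcase
        · exact nocross C.1 C.2 E hE hrC hrE
            (Or.inl ⟨v, x, u, y, hcase, huin.1, huin.2, hv, hu, hxE, hyE⟩)
        · exact nocross C.1 C.2 E hE hrC hrE
            (Or.inr ⟨x, u, y, v, huin.1, huin.2, hcase, hxE, hyE, hu, hv⟩)
      have hBjIn : ∀ z ∈ Bj, x < z ∧ z < y := by
        rcases Hd ⟨Bj, hBj⟩ hrBj with h | h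
        · exact h
        · exact (h j hjBj ⟨hxin.2, hy⟩).elim
      have hBiIn : ∀ z ∈ Bi, x < z ∧ z < y := by
        exact reach_inside Hd hrBj (hrBj.symm.trans hrBi) hBjIn
      have := (hBiIn i hiBi).1
      exact absurd this (not_lt.mpr (le_of_lt hxin.1))
  · -- no block of the C₀ component has points both inside and outside (i,j)
    push_neg at hb
    have Hd : ∀ C : {V' // V' ∈ π}, (interGraph π).Reachable ⟨C₀, hC₀⟩ C →
        (∀ z ∈ C.1, i < z ∧ z < j) ∨ (∀ z ∈ C.1, ¬(i < z ∧ z < j)) := by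
      intro C hrC
      by_cases hex : ∃ x ∈ C.1, i < x ∧ x < j
      · obtain ⟨x, hx, hxin⟩ := hex
        left
        intro y hy
        exact hb C.1 C.2 hrC x hx y hy hxin
      · right
        intro z hz hzin
        exact hex ⟨z, hz, hzin⟩
    have hBkIn : ∀ z ∈ Bk, i < z ∧ z < j := by
      rcases Hd ⟨Bk, hBk⟩ hrBk with h | h
      · exact h
      · exact (h k hkBk ⟨h1, h2⟩).elim
    have hBlIn : ∀ z ∈ Bl, i < z ∧ z < j :=
      reach_inside Hd hrBk (hrBk.symm.trans hrBl) hBkIn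
    exact absurd (hBlIn l hlBl).2 (not_lt.mpr (le_of_lt h3))

lemma compPart_noncrossing (hpart : IsPartitionOn Finset.univ π) :
    NoncrossingPart (compPart π) := by
  intro V hV W hW hne hcr
  rcases hcr with h | h
  · exact compPart_nocross_aux hpart hV hW hne h
  · exact compPart_nocross_aux hpart hW hV hne.symm h
end NC
section CompPart
variable {n : ℕ} {π : Finset (Finset (Fin n))}

lemma compPart_isPartition (hpart : IsPartitionOn Finset.univ π) :
    IsPartitionOn Finset.univ (compPart π) := by
  constructor
  · intro V hV
    obtain ⟨B, hB, rfl⟩ := mem_compPart.mp hV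
    exact ⟨(hpart.1 B hB).1.mono (subset_ptset_self hB), subset_univ _⟩
  · intro i _
    obtain ⟨B, ⟨hB, hiB⟩, _⟩ := hpart.2 i (mem_univ i)
    refine ⟨ptset π B hB, ⟨mem_compPart.mpr ⟨B, hB, rfl⟩, subset_ptset_self hB hiB⟩, ?_⟩
    rintro V ⟨hV, hiV⟩
    obtain ⟨C, hC, rfl⟩ := mem_compPart.mp hV
    exact ptset_eq_of_mem hpart hC hB hiV (subset_ptset_self hB hiB)

lemma compPart_mem_ncPartitions (hpart : IsPartitionOn Finset.univ π) :
    compPart π ∈ ncPartitions n := by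
  simp only [ncPartitions, mem_filter, mem_univ, true_and]
  exact ⟨compPart_isPartition hpart, compPart_noncrossing hpart⟩

lemma ccCount_eq_card_compPart (hpart : IsPartitionOn Finset.univ π) :
    ccCount π = (compPart π).card := by
  classical
  have hconst : ∀ (v w : {V // V ∈ π}) (p : (interGraph π).Walk v w), p.IsPath →
      ptset π v.1 v.2 = ptset π w.1 w.2 := by
    intro v w p _
    exact (ptset_eq_iff hpart v.2 w.2).mpr ⟨p⟩
  set fc : (interGraph π).ConnectedComponent → Finset (Fin n) :=
    SimpleGraph.ConnectedComponent.lift (fun v => ptset π v.1 v.2) hconst with hfc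
  have hmem : ∀ c, fc c ∈ compPart π := by
    intro c
    induction c using SimpleGraph.ConnectedComponent.ind with
    | _ v => exact mem_compPart.mpr ⟨v.1, v.2, rfl⟩
  have hbij : Function.Bijective (fun c => (⟨fc c, hmem c⟩ : {x // x ∈ compPart π})) := by
    constructor
    · intro c c'
      induction c using SimpleGraph.ConnectedComponent.ind with
      | _ v =>
        induction c' using SimpleGraph.ConnectedComponent.ind with
        | _ w =>
          intro h
          have h' : ptset π v.1 v.2 = ptset π w.1 w.2 := congrArg Subtype.val h
          have := (ptset_eq_iff hpart v.2 w.2).mp h'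
          exact SimpleGraph.ConnectedComponent.sound (by simpa using this)
    · rintro ⟨x, hx⟩
      obtain ⟨B, hB, rfl⟩ := mem_compPart.mp hx
      exact ⟨(interGraph π).connectedComponentMk ⟨B, hB⟩, rfl⟩
  have := Nat.card_eq_of_bijective _ hbij
  rw [ccCount, this]
  simp [Nat.card_eq_fintype_card]

end CompPart
open scoped Classical in
/-- The connected bipartite pair partitions supported on `V`. -/
noncomputable def Eset {p : ℕ} (V : Finset (Fin p)) : Finset (Finset (Finset (Fin p))) :=
  Finset.univ.filter (fun ρ => IsPairPartitionOn V ρ ∧ IsBipartitePart ρ ∧ IsConnectedPart ρ)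

lemma mem_Eset {p : ℕ} {V : Finset (Fin p)} {ρ : Finset (Finset (Fin p))} :
    ρ ∈ Eset V ↔ IsPairPartitionOn V ρ ∧ IsBipartitePart ρ ∧ IsConnectedPart ρ := by
  simp [Eset]

section Restrict
variable {n : ℕ} {π : Finset (Finset (Fin n))}

lemma mem_restrictPart {T B : Finset (Fin n)} :
    B ∈ restrictPart π T ↔ B ∈ π ∧ B ⊆ T := by
  simp [restrictPart]

lemma bipartite_of_subset {ρ : Finset (Finset (Fin n))} (hsub : ρ ⊆ π)
    (hbp : IsBipartitePart π) : IsBipartitePart ρ :=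
  SimpleGraph.Colorable.of_hom (subEmb hsub).toHom hbp

lemma restrict_mem_Eset (hpp : IsPairPartition n π) (hbp : IsBipartitePart π)
    {B₀ : Finset (Fin n)} (hB₀ : B₀ ∈ π) :
    restrictPart π (ptset π B₀ hB₀) ∈ Eset (ptset π B₀ hB₀) := by
  have hpart := hpp.1
  set V := ptset π B₀ hB₀ with hV
  set ρ := restrictPart π V with hρ
  have hsub : ρ ⊆ π := filter_subset _ _
  have hcl : ∀ B ∈ ρ, ∀ C ∈ π, B ≠ C → CrossSym B C → C ∈ ρ := by
    intro B hB C hC hne hcr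
    obtain ⟨hBπ, hBV⟩ := mem_restrictPart.mp hB
    have hrB : (interGraph π).Reachable ⟨B₀, hB₀⟩ ⟨B, hBπ⟩ :=
      (block_subset_ptset_iff hpart hB₀ hBπ).mp hBV
    have hadj : (interGraph π).Adj ⟨B, hBπ⟩ ⟨C, hC⟩ :=
      ⟨fun hh => hne (congrArg Subtype.val hh), hcr⟩
    exact mem_restrictPart.mpr ⟨hC,
      (block_subset_ptset_iff hpart hB₀ hC).mpr (hrB.trans hadj.reachable)⟩
  have hB₀ρ : B₀ ∈ ρ := mem_restrictPart.mpr ⟨hB₀, subset_ptset_self hB₀⟩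
  refine mem_Eset.mpr ⟨⟨⟨?_, ?_⟩, ?_⟩, ?_, ?_⟩
  · intro B hB
    obtain ⟨hBπ, hBV⟩ := mem_restrictPart.mp hB
    exact ⟨(hpart.1 B hBπ).1, hBV⟩
  · intro i hi
    obtain ⟨W, hW, hiW, hr⟩ := mem_ptset.mp hi
    have hWρ : W ∈ ρ := mem_restrictPart.mpr ⟨hW, (block_subset_ptset_iff hpart hB₀ hW).mpr hr⟩
    refine ⟨W, ⟨hWρ, hiW⟩, ?_⟩
    rintro B ⟨hB, hiB⟩
    exact part_eq_of_mem hpart (mem_restrictPart.mp hB).1 hW hiB hiW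
  · intro B hB
    exact hpp.2 B (mem_restrictPart.mp hB).1
  · exact bipartite_of_subset hsub hbp
  · rw [IsConnectedPart, SimpleGraph.connected_iff]
    constructor
    · -- preconnected
      rintro ⟨B, hB⟩ ⟨C, hC⟩
      obtain ⟨hBπ, hBV⟩ := mem_restrictPart.mp hB
      obtain ⟨hCπ, hCV⟩ := mem_restrictPart.mp hC
      have hrB : (interGraph π).Reachable ⟨B₀, hB₀⟩ ⟨B, hBπ⟩ :=
        (block_subset_ptset_iff hpart hB₀ hBπ).mp hBV
      have hrC : (interGraph π).Reachable ⟨B₀, hB₀⟩ ⟨C, hCπ⟩ :=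
        (block_subset_ptset_iff hpart hB₀ hCπ).mp hCV
      obtain ⟨w⟩ := hrB.symm.trans hrC
      obtain ⟨hv, r⟩ := reach_lift hcl w hB
      exact r
    · exact ⟨⟨B₀, hB₀ρ⟩⟩

end Restrict
section Glue
variable {p : ℕ}

open scoped Classical

noncomputable def glue (σ : Finset (Finset (Fin p)))
    (g : ∀ V ∈ σ, Finset (Finset (Fin p))) : Finset (Finset (Fin p)) :=
  σ.attach.biUnion (fun V => g V.1 V.2)

variable {σ : Finset (Finset (Fin p))} {g : ∀ V ∈ σ, Finset (Finset (Fin p))}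

lemma mem_glue {B : Finset (Fin p)} :
    B ∈ glue σ g ↔ ∃ V, ∃ hV : V ∈ σ, B ∈ g V hV := by
  simp only [glue, mem_biUnion, mem_attach, true_and]
  constructor
  · rintro ⟨⟨V, hV⟩, h⟩; exact ⟨V, hV, h⟩
  · rintro ⟨V, hV, h⟩; exact ⟨⟨V, hV⟩, h⟩

lemma glue_sub {V : Finset (Fin p)} (hV : V ∈ σ) : g V hV ⊆ glue σ g :=
  fun B hB => mem_glue.mpr ⟨V, hV, hB⟩

variable (hσp : IsPartitionOn Finset.univ σ) (hσnc : NoncrossingPart σ)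
  (hg : ∀ V (hV : V ∈ σ), g V hV ∈ Eset V)

section
include hg

lemma glue_block_sub {V B : Finset (Fin p)} (hV : V ∈ σ) (hB : B ∈ g V hV) :
    B.Nonempty ∧ B ⊆ V :=
  ((mem_Eset.mp (hg V hV)).1.1.1 B hB)

include hσp

lemma glue_host_unique {V V' B : Finset (Fin p)} (hV : V ∈ σ) (hV' : V' ∈ σ)
    (hB : B ∈ g V hV) (hB' : B ∈ g V' hV') : V = V' := by
  obtain ⟨⟨x, hx⟩, hsub⟩ := glue_block_sub hg hV hB
  obtain ⟨_, hsub'⟩ := glue_block_sub hg hV' hB'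
  exact part_eq_of_mem hσp hV hV' (hsub hx) (hsub' hx)

include hσnc

lemma glue_nocross_across {V V' B B' : Finset (Fin p)} (hV : V ∈ σ) (hV' : V' ∈ σ)
    (hB : B ∈ g V hV) (hB' : B' ∈ g V' hV') (hne : V ≠ V') : ¬ CrossSym B B' := by
  intro hcr
  exact hσnc V hV V' hV' hne
    (crossSym_mono (glue_block_sub hg hV hB).2 (glue_block_sub hg hV' hB').2 hcr)

lemma glue_host_eq_of_cross {V V' B B' : Finset (Fin p)} (hV : V ∈ σ) (hV' : V' ∈ σ)
    (hB : B ∈ g V hV) (hB' : B' ∈ g V' hV') (hcr : CrossSym B B') : V = V' := by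
  by_contra hne
  exact glue_nocross_across hσp hσnc hg hV hV' hB hB' hne hcr

lemma glue_isPairPartition : IsPairPartition p (glue σ g) := by
  refine ⟨⟨?_, ?_⟩, ?_⟩
  · intro B hB
    obtain ⟨V, hV, hBg⟩ := mem_glue.mp hB
    exact ⟨(glue_block_sub hg hV hBg).1, subset_univ _⟩
  · intro i _
    obtain ⟨V, ⟨hV, hiV⟩, _⟩ := hσp.2 i (mem_univ i)
    obtain ⟨B, ⟨hBg, hiB⟩, hBuniq⟩ := (mem_Eset.mp (hg V hV)).1.1.2 i hiV
    refine ⟨B, ⟨glue_sub hV hBg, hiB⟩, ?_⟩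
    rintro B' ⟨hB', hiB'⟩
    obtain ⟨V', hV', hB'g⟩ := mem_glue.mp hB'
    have hiV' : i ∈ V' := (glue_block_sub hg hV' hB'g).2 hiB'
    have : V' = V := part_eq_of_mem hσp hV' hV hiV' hiV
    subst this
    exact hBuniq B' ⟨hB'g, hiB'⟩
  · intro B hB
    obtain ⟨V, hV, hBg⟩ := mem_glue.mp hB
    exact (mem_Eset.mp (hg V hV)).1.2 B hBg

lemma glue_bipartite : IsBipartitePart (glue σ g) := by
  have hC : ∀ (V : Finset (Fin p)) (hV : V ∈ σ),
      Nonempty ((interGraph (g V hV)).Coloring (Fin 2)) :=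
    fun V hV => (mem_Eset.mp (hg V hV)).2.1
  have key : ∀ (B : Finset (Fin p)) (V : Finset (Fin p)) (hV : V ∈ σ) (hm : B ∈ g V hV),
      ∀ (V' : Finset (Fin p)) (hV' : V' ∈ σ) (hm' : B ∈ g V' hV'),
        (hC V hV).some ⟨B, hm⟩ = (hC V' hV').some ⟨B, hm'⟩ := by
    intro B V hV hm V' hV' hm'
    have : V = V' := glue_host_unique hσp hg hV hV' hm hm'
    subst this
    rfl
  refine ⟨SimpleGraph.Coloring.mk
    (fun v => if h : ∃ V, ∃ hV : V ∈ σ, v.1 ∈ g V hV then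
      (hC h.choose h.choose_spec.choose).some ⟨v.1, h.choose_spec.choose_spec⟩ else 0) ?_⟩
  rintro v w ⟨hvw, hcr⟩ heq
  have hv := mem_glue.mp v.2
  have hw := mem_glue.mp w.2
  rw [dif_pos hv, dif_pos hw] at heq
  have memg_congr : ∀ {V V' : Finset (Fin p)} (e : V = V') (hV : V ∈ σ) (hV' : V' ∈ σ)
      {B : Finset (Fin p)}, B ∈ g V hV → B ∈ g V' hV' := by
    intro V V' e hV hV' B h
    subst e
    exact h
  have hmv := hv.choose_spec.choose_spec
  have hmw' := hw.choose_spec.choose_spec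
  have e3 : hv.choose = hw.choose :=
    glue_host_eq_of_cross hσp hσnc hg _ _ hmv hmw' hcr
  have hmw : w.1 ∈ g hv.choose hv.choose_spec.choose :=
    memg_congr e3.symm hw.choose_spec.choose hv.choose_spec.choose hmw'
  have heq2 : (hC hv.choose hv.choose_spec.choose).some ⟨v.1, hmv⟩ =
      (hC hv.choose hv.choose_spec.choose).some ⟨w.1, hmw⟩ := by
    rw [heq]
    exact key w.1 hw.choose hw.choose_spec.choose hmw' hv.choose hv.choose_spec.choose hmw
  have hadj : (interGraph (g hv.choose hv.choose_spec.choose)).Adj ⟨v.1, hmv⟩ ⟨w.1, hmw⟩ := by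
    refine ⟨?_, hcr⟩
    intro hh
    injection hh with hh2
    exact hvw (Subtype.ext hh2)
  exact ((hC hv.choose hv.choose_spec.choose).some.valid hadj) heq2

lemma glue_ptset {V B : Finset (Fin p)} (hV : V ∈ σ) (hBg : B ∈ g V hV)
    (hBπ : B ∈ glue σ g) : ptset (glue σ g) B hBπ = V := by
  apply Finset.Subset.antisymm
  · intro i hi
    obtain ⟨W, hW, hiW, hr⟩ := mem_ptset.mp hi
    have hcl : ∀ X ∈ g V hV, ∀ C ∈ glue σ g, X ≠ C → CrossSym X C → C ∈ g V hV := by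
      intro X hX C hC hne hcr
      obtain ⟨V', hV', hCg⟩ := mem_glue.mp hC
      have : V = V' := glue_host_eq_of_cross hσp hσnc hg hV hV' hX hCg hcr
      subst this
      exact hCg
    obtain ⟨w⟩ := hr
    obtain ⟨hWg, _⟩ := reach_lift hcl w hBg
    exact (glue_block_sub hg hV hWg).2 hiW
  · intro i hiV
    obtain ⟨W, ⟨hWg, hiW⟩, _⟩ := (mem_Eset.mp (hg V hV)).1.1.2 i hiV
    have hconn : IsConnectedPart (g V hV) := (mem_Eset.mp (hg V hV)).2.2
    have hr : (interGraph (g V hV)).Reachable ⟨B, hBg⟩ ⟨W, hWg⟩ := hconn.preconnected _ _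
    have hr' := hr.map (subEmb (glue_sub hV)).toHom
    exact mem_ptset.mpr ⟨W, glue_sub hV hWg, hiW, hr'⟩

lemma glue_compPart : compPart (glue σ g) = σ := by
  ext V
  constructor
  · intro hV
    obtain ⟨B, hB, rfl⟩ := mem_compPart.mp hV
    obtain ⟨V', hV', hBg⟩ := mem_glue.mp hB
    rw [glue_ptset hσp hσnc hg hV' hBg hB]
    exact hV'
  · intro hV
    obtain ⟨x, hx⟩ := (hσp.1 V hV).1
    obtain ⟨B, ⟨hBg, _⟩, _⟩ := (mem_Eset.mp (hg V hV)).1.1.2 x hx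
    have hBπ : B ∈ glue σ g := glue_sub hV hBg
    rw [← glue_ptset hσp hσnc hg hV hBg hBπ]
    exact mem_compPart.mpr ⟨B, hBπ, rfl⟩

lemma glue_restrict {V : Finset (Fin p)} (hV : V ∈ σ) :
    restrictPart (glue σ g) V = g V hV := by
  ext B
  rw [mem_restrictPart]
  constructor
  · rintro ⟨hB, hBV⟩
    obtain ⟨V', hV', hBg⟩ := mem_glue.mp hB
    have hne : B.Nonempty := (glue_block_sub hg hV' hBg).1
    obtain ⟨x, hx⟩ := hne
    have : V' = V := part_eq_of_mem hσp hV' hV ((glue_block_sub hg hV' hBg).2 hx) (hBV hx)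
    subst this
    exact hBg
  · intro hBg
    exact ⟨glue_sub hV hBg, (glue_block_sub hg hV hBg).2⟩

end

lemma glue_recover {π : Finset (Finset (Fin p))} (hpart : IsPartitionOn Finset.univ π)
    (hcomp : compPart π = σ) :
    glue σ (fun V _ => restrictPart π V) = π := by
  ext B
  rw [mem_glue]
  constructor
  · rintro ⟨V, hV, hB⟩
    exact (mem_restrictPart.mp hB).1
  · intro hB
    have hV : ptset π B hB ∈ σ := by
      rw [← hcomp]
      exact mem_compPart.mpr ⟨B, hB, rfl⟩
    exact ⟨ptset π B hB, hV, mem_restrictPart.mpr ⟨hB, subset_ptset_self hB⟩⟩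

end Glue
section Fiber
variable {p : ℕ}

open scoped Classical

lemma mem_biPairPartitions {π : Finset (Finset (Fin p))} :
    π ∈ biPairPartitions p ↔ IsPairPartition p π ∧ IsBipartitePart π := by
  simp [biPairPartitions, pairPartitions]

lemma mem_ncPartitions {σ : Finset (Finset (Fin p))} :
    σ ∈ ncPartitions p ↔ IsPartitionOn Finset.univ σ ∧ NoncrossingPart σ := by
  simp [ncPartitions]

lemma fiber_card_s12 (σ : Finset (Finset (Fin p))) (hσ : σ ∈ ncPartitions p) :
    ((biPairPartitions p).filter (fun π => compPart π = σ)).card =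
      ∏ V ∈ σ, (Eset V).card := by
  obtain ⟨hσp, hσnc⟩ := mem_ncPartitions.mp hσ
  rw [← Finset.card_pi]
  refine Finset.card_bij' (fun π _ => fun V _ => restrictPart π V)
    (fun g _ => glue σ g) ?_ ?_ ?_ ?_
  · -- forward lands in pi
    intro π hπ
    rw [Finset.mem_pi]
    intro V hV
    obtain ⟨hπb, hcomp⟩ := Finset.mem_filter.mp hπ
    obtain ⟨hpp, hbp⟩ := mem_biPairPartitions.mp hπb
    have hVc : V ∈ compPart π := hcomp ▸ hV
    obtain ⟨B, hB, rfl⟩ := mem_compPart.mp hVc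
    exact restrict_mem_Eset hpp hbp hB
  · -- backward lands in fiber
    intro g hgpi
    have hg : ∀ V (hV : V ∈ σ), g V hV ∈ Eset V := Finset.mem_pi.mp hgpi
    refine Finset.mem_filter.mpr ⟨mem_biPairPartitions.mpr
      ⟨glue_isPairPartition hσp hσnc hg, glue_bipartite hσp hσnc hg⟩, glue_compPart hσp hσnc hg⟩
  · -- left inverse
    intro π hπ
    obtain ⟨hπb, hcomp⟩ := Finset.mem_filter.mp hπ
    obtain ⟨hpp, _⟩ := mem_biPairPartitions.mp hπb
    exact glue_recover hpp.1 hcomp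
  · -- right inverse
    intro g hgpi
    have hg : ∀ V (hV : V ∈ σ), g V hV ∈ Eset V := Finset.mem_pi.mp hgpi
    funext V hV
    exact glue_restrict hσp hσnc hg hV

end Fiber
section Relabel
open scoped Classical
variable {a b : ℕ}

lemma image_crosses_iff (f : Fin a → Fin b) (S : Finset (Fin a))
    (hmono : ∀ x ∈ S, ∀ y ∈ S, x < y → f x < f y)
    {A B : Finset (Fin a)} (hA : A ⊆ S) (hB : B ⊆ S) :
    Crosses (A.image f) (B.image f) ↔ Crosses A B := by
  have hrefl : ∀ x ∈ S, ∀ y ∈ S, f x < f y → x < y := by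
    intro x hx y hy hlt
    rcases lt_trichotomy x y with h | h | h
    · exact h
    · subst h; exact absurd hlt (lt_irrefl _)
    · exact absurd (hmono y hy x hx h) (not_lt.mpr (le_of_lt hlt))
  constructor
  · rintro ⟨i, k, j, l, h1, h2, h3, hi, hj, hk, hl⟩
    obtain ⟨i', hi', rfl⟩ := Finset.mem_image.mp hi
    obtain ⟨j', hj', rfl⟩ := Finset.mem_image.mp hj
    obtain ⟨k', hk', rfl⟩ := Finset.mem_image.mp hk
    obtain ⟨l', hl', rfl⟩ := Finset.mem_image.mp hl
    exact ⟨i', k', j', l',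
      hrefl i' (hA hi') k' (hB hk') h1,
      hrefl k' (hB hk') j' (hA hj') h2,
      hrefl j' (hA hj') l' (hB hl') h3, hi', hj', hk', hl'⟩
  · rintro ⟨i, k, j, l, h1, h2, h3, hi, hj, hk, hl⟩
    exact ⟨f i, f k, f j, f l,
      hmono i (hA hi) k (hB hk) h1,
      hmono k (hB hk) j (hA hj) h2,
      hmono j (hA hj) l (hB hl) h3,
      Finset.mem_image_of_mem f hi, Finset.mem_image_of_mem f hj,
      Finset.mem_image_of_mem f hk, Finset.mem_image_of_mem f hl⟩

lemma image_crossSym_iff (f : Fin a → Fin b) (S : Finset (Fin a))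
    (hmono : ∀ x ∈ S, ∀ y ∈ S, x < y → f x < f y)
    {A B : Finset (Fin a)} (hA : A ⊆ S) (hB : B ⊆ S) :
    CrossSym (A.image f) (B.image f) ↔ CrossSym A B :=
  or_congr (image_crosses_iff f S hmono hA hB) (image_crosses_iff f S hmono hB hA)

lemma relabel_transfer (f : Fin a → Fin b) (S : Finset (Fin a)) (T : Finset (Fin b))
    (hmono : ∀ x ∈ S, ∀ y ∈ S, x < y → f x < f y) (hT : S.image f = T)
    {ρ : Finset (Finset (Fin a))} (hρ : IsPairPartitionOn S ρ)
    (hbp : IsBipartitePart ρ) (hcn : IsConnectedPart ρ) :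
    IsPairPartitionOn T (ρ.image (fun B => B.image f)) ∧
      IsBipartitePart (ρ.image (fun B => B.image f)) ∧
      IsConnectedPart (ρ.image (fun B => B.image f)) := by
  have hinj : ∀ x ∈ S, ∀ y ∈ S, f x = f y → x = y := by
    intro x hx y hy hxy
    rcases lt_trichotomy x y with h | h | h
    · exact absurd (hmono x hx y hy h) (hxy ▸ lt_irrefl _)
    · exact h
    · exact absurd (hmono y hy x hx h) (hxy ▸ lt_irrefl _)
  have hBS : ∀ B ∈ ρ, B ⊆ S := fun B hB => (hρ.1.1 B hB).2
  set ρ' := ρ.image (fun B => B.image f) with hρ'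
  have himinj : ∀ B ∈ ρ, ∀ B' ∈ ρ, B.image f = B'.image f → B = B' := by
    intro B hB B' hB' he
    ext x
    constructor
    · intro hx
      have : f x ∈ B'.image f := he ▸ Finset.mem_image_of_mem f hx
      obtain ⟨y, hy, hxy⟩ := Finset.mem_image.mp this
      rwa [← hinj y (hBS B' hB' hy) x (hBS B hB hx) hxy]
    · intro hx
      have : f x ∈ B.image f := he ▸ Finset.mem_image_of_mem f hx
      obtain ⟨y, hy, hxy⟩ := Finset.mem_image.mp this
      rwa [← hinj y (hBS B hB hy) x (hBS B' hB' hx) hxy]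
  have hpp' : IsPairPartitionOn T ρ' := by
    refine ⟨⟨?_, ?_⟩, ?_⟩
    · intro B' hB'
      obtain ⟨B, hB, rfl⟩ := Finset.mem_image.mp hB'
      exact ⟨((hρ.1.1 B hB).1).image f, hT ▸ Finset.image_subset_image (hBS B hB)⟩
    · intro i hi
      obtain ⟨x, hx, rfl⟩ := Finset.mem_image.mp (hT ▸ hi : i ∈ S.image f)
      obtain ⟨B, ⟨hB, hxB⟩, hBu⟩ := hρ.1.2 x hx
      refine ⟨B.image f, ⟨Finset.mem_image_of_mem _ hB, Finset.mem_image_of_mem f hxB⟩, ?_⟩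
      rintro C' ⟨hC', hxC'⟩
      obtain ⟨C, hC, rfl⟩ := Finset.mem_image.mp hC'
      obtain ⟨y, hy, hxy⟩ := Finset.mem_image.mp hxC'
      have : y = x := hinj y (hBS C hC hy) x hx hxy
      subst this
      rw [hBu C ⟨hC, hy⟩]
    · intro B' hB'
      obtain ⟨B, hB, rfl⟩ := Finset.mem_image.mp hB'
      rw [Finset.card_image_of_injOn (fun x hx y hy => hinj x (hBS B hB hx) y (hBS B hB hy))]
      exact hρ.2 B hB
  have hbij : Function.Bijective (fun (v : {B // B ∈ ρ}) =>
      (⟨v.1.image f, Finset.mem_image_of_mem _ v.2⟩ : {B' // B' ∈ ρ'})) := by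
    constructor
    · rintro ⟨B, hB⟩ ⟨C, hC⟩ h
      have := congrArg Subtype.val h
      exact Subtype.ext (himinj B hB C hC this)
    · rintro ⟨B', hB'⟩
      obtain ⟨B, hB, rfl⟩ := Finset.mem_image.mp hB'
      exact ⟨⟨B, hB⟩, rfl⟩
  set e := Equiv.ofBijective _ hbij with he
  have hiso : interGraph ρ ≃g interGraph ρ' := by
    refine ⟨e, ?_⟩
    rintro ⟨B, hB⟩ ⟨C, hC⟩
    show (_ ≠ _ ∧ CrossSym _ _) ↔ (_ ≠ _ ∧ CrossSym _ _)
    constructor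
    · rintro ⟨h1, h2⟩
      refine ⟨fun hh => h1 (by rw [hh]), ?_⟩
      exact (image_crossSym_iff f S hmono (hBS B hB) (hBS C hC)).mp h2
    · rintro ⟨h1, h2⟩
      refine ⟨fun hh => h1 (e.injective hh), ?_⟩
      exact (image_crossSym_iff f S hmono (hBS B hB) (hBS C hC)).mpr h2
  refine ⟨hpp', ?_, ?_⟩
  · exact SimpleGraph.Colorable.of_hom hiso.symm.toEmbedding.toHom hbp
  · exact (SimpleGraph.Iso.connected_iff hiso).mp hcn

end Relabel
section Transfer
open scoped Classical

lemma mem_biconPairPartitions {m : ℕ} {τ : Finset (Finset (Fin m))} :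
    τ ∈ biconPairPartitions m ↔
      IsPairPartition m τ ∧ IsBipartitePart τ ∧ IsConnectedPart τ := by
  simp only [biconPairPartitions, biPairPartitions, pairPartitions, mem_filter, mem_univ,
    true_and]
  tauto

lemma Eset_card {p : ℕ} {V : Finset (Fin p)} (hV : V.Nonempty) :
    (Eset V).card = (biconPairPartitions V.card).card := by
  have hm : 0 < V.card := Finset.card_pos.mpr hV
  set m := V.card with hmdef
  set e := V.orderIsoOfFin hmdef.symm with he
  set f : Fin m → Fin p := fun i => (e i : Fin p) with hf
  set g : Fin p → Fin m := fun x => if h : x ∈ V then e.symm ⟨x, h⟩ else ⟨0, hm⟩ with hg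
  have hfmem : ∀ i, f i ∈ V := fun i => (e i).2
  have hfmono : ∀ x ∈ (Finset.univ : Finset (Fin m)), ∀ y ∈ Finset.univ, x < y → f x < f y := by
    intro x _ y _ hxy
    have : e x < e y := e.lt_iff_lt.mpr hxy
    exact Subtype.coe_lt_coe.mpr this
  have hgf : ∀ i : Fin m, g (f i) = i := by
    intro i
    rw [hg]
    dsimp only
    rw [dif_pos (hfmem i)]
    have : (⟨f i, hfmem i⟩ : {x // x ∈ V}) = e i := Subtype.ext rfl
    rw [this, OrderIso.symm_apply_apply]
  have hfg : ∀ x ∈ V, f (g x) = x := by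
    intro x hx
    rw [hg]
    dsimp only
    rw [dif_pos hx]
    show ((e (e.symm ⟨x, hx⟩)) : Fin p) = x
    rw [OrderIso.apply_symm_apply]
  have hgmono : ∀ x ∈ V, ∀ y ∈ V, x < y → g x < g y := by
    intro x hx y hy hxy
    rw [hg]
    dsimp only
    rw [dif_pos hx, dif_pos hy]
    exact e.symm.lt_iff_lt.mpr (Subtype.mk_lt_mk.mpr hxy)
  have himgf : Finset.univ.image f = V := by
    ext y
    simp only [Finset.mem_image, Finset.mem_univ, true_and]
    constructor
    · rintro ⟨i, rfl⟩; exact hfmem i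
    · intro hy; exact ⟨g y, hfg y hy⟩
  have himgg : V.image g = Finset.univ := by
    ext j
    simp only [Finset.mem_image, Finset.mem_univ, iff_true]
    exact ⟨f j, hfmem j, hgf j⟩
  refine Finset.card_bij' (fun ρ _ => ρ.image (fun B => B.image g))
    (fun τ _ => τ.image (fun B => B.image f)) ?_ ?_ ?_ ?_
  · intro ρ hρ
    obtain ⟨hpp, hbp, hcn⟩ := mem_Eset.mp hρ
    obtain ⟨h1, h2, h3⟩ := relabel_transfer g V Finset.univ hgmono himgg hpp hbp hcn
    exact mem_biconPairPartitions.mpr ⟨h1, h2, h3⟩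
  · intro τ hτ
    obtain ⟨hpp, hbp, hcn⟩ := mem_biconPairPartitions.mp hτ
    obtain ⟨h1, h2, h3⟩ := relabel_transfer f Finset.univ V hfmono himgf hpp hbp hcn
    exact mem_Eset.mpr ⟨h1, h2, h3⟩
  · intro ρ hρ
    obtain ⟨hpp, _, _⟩ := mem_Eset.mp hρ
    rw [Finset.image_image]
    have : ∀ B ∈ ρ, ((fun B => B.image f) ∘ (fun B => B.image g)) B = id B := by
      intro B hB
      have hBV : B ⊆ V := (hpp.1.1 B hB).2
      show (B.image g).image f = B
      rw [Finset.image_image]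
      have h := Finset.image_congr (f := f ∘ g) (g := id) (s := B)
        (fun x hx => hfg x (hBV hx))
      rw [h, Finset.image_id]
    rw [Finset.image_congr this, Finset.image_id]
  · intro τ hτ
    rw [Finset.image_image]
    have : ∀ B ∈ τ, ((fun B => B.image g) ∘ (fun B => B.image f)) B = id B := by
      intro B hB
      show (B.image f).image g = B
      rw [Finset.image_image]
      have h := Finset.image_congr (f := g ∘ f) (g := id) (s := B)
        (fun x _ => hgf x)
      rw [h, Finset.image_id]
    rw [Finset.image_congr this, Finset.image_id]

lemma pairPartition_card_eq {m : ℕ} {τ : Finset (Finset (Fin m))}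
    (h : IsPairPartition m τ) : m = 2 * τ.card := by
  have hsum := part_sum_card h.1
  have h2 : ∑ B ∈ τ, B.card = 2 * τ.card := by
    rw [Finset.sum_congr rfl h.2, Finset.sum_const, smul_eq_mul, mul_comm]
  rw [h2, Finset.card_univ, Fintype.card_fin] at hsum
  omega

lemma bicon_odd_empty {k : ℕ} (hk : Odd k) : biconPairPartitions k = ∅ := by
  rw [Finset.eq_empty_iff_forall_notMem]
  intro τ hτ
  obtain ⟨hpp, _, _⟩ := mem_biconPairPartitions.mp hτ
  have h2 := pairPartition_card_eq hpp
  obtain ⟨r, hr⟩ := hk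
  omega

end Transfer
section Master
open scoped Classical

noncomputable def cval (k : ℕ) : ℝ :=
  2 * (1 / 2 : ℝ) ^ (k / 2) * (biconPairPartitions k).card

lemma pairPartitionOn_card {p : ℕ} {S : Finset (Fin p)} {ρ : Finset (Finset (Fin p))}
    (h : IsPairPartitionOn S ρ) : S.card = 2 * ρ.card := by
  have hsum := part_sum_card h.1
  have h2 : ∑ B ∈ ρ, B.card = 2 * ρ.card := by
    rw [Finset.sum_congr rfl h.2, Finset.sum_const, smul_eq_mul, mul_comm]
  omega

lemma sum_half_eq {p : ℕ} {σ : Finset (Finset (Fin p))}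
    (hsum : ∑ V ∈ σ, V.card = p) (heven : ∀ V ∈ σ, Even V.card) :
    ∑ V ∈ σ, V.card / 2 = p / 2 := by
  have : ∑ V ∈ σ, V.card = 2 * ∑ V ∈ σ, V.card / 2 := by
    rw [Finset.mul_sum]
    refine Finset.sum_congr rfl ?_
    intro V hV
    obtain ⟨r, hr⟩ := heven V hV
    omega
  omega

lemma master (p : ℕ) (hp : 0 < p) :
    mu1Moment p = ∑ σ ∈ ncPartitions p, ∏ V ∈ σ, cval V.card := by
  have hblocksum : ∀ σ ∈ ncPartitions p, ∑ V ∈ σ, V.card = p := by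
    intro σ hσ
    rw [part_sum_card (mem_ncPartitions.mp hσ).1, Finset.card_univ, Fintype.card_fin]
  by_cases hodd : Odd p
  · rw [mu1Moment, if_pos hodd]
    symm
    apply Finset.sum_eq_zero
    intro σ hσ
    have hO : ∃ V ∈ σ, Odd V.card := by
      by_contra hc
      push_neg at hc
      simp only [Nat.not_odd_iff_even] at hc
      have := sum_half_eq (hblocksum σ hσ) hc
      have h2 : ∑ V ∈ σ, V.card = 2 * ∑ V ∈ σ, V.card / 2 := by
        rw [Finset.mul_sum]
        refine Finset.sum_congr rfl ?_
        intro V hV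
        obtain ⟨r, hr⟩ := hc V hV
        omega
      obtain ⟨r, hr⟩ := hodd
      have := hblocksum σ hσ
      omega
    obtain ⟨V, hV, hVodd⟩ := hO
    apply Finset.prod_eq_zero hV
    rw [cval, bicon_odd_empty hVodd]
    simp
  · rw [mu1Moment, if_neg hodd]
    have hmaps : ∀ π ∈ biPairPartitions p, compPart π ∈ ncPartitions p := by
      intro π hπ
      exact compPart_mem_ncPartitions (mem_biPairPartitions.mp hπ).1.1
    rw [← Finset.sum_fiberwise_of_maps_to hmaps (fun π => (2 : ℝ) ^ ccCount π)]
    rw [Finset.mul_sum]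
    refine Finset.sum_congr rfl ?_
    intro σ hσ
    obtain ⟨hσp, hσnc⟩ := mem_ncPartitions.mp hσ
    have hVne : ∀ V ∈ σ, V.Nonempty := fun V hV => (hσp.1 V hV).1
    have hcc : ∀ π ∈ (biPairPartitions p).filter (fun π => compPart π = σ),
        ccCount π = σ.card := by
      intro π hπ
      obtain ⟨hπb, hcomp⟩ := Finset.mem_filter.mp hπ
      rw [ccCount_eq_card_compPart (mem_biPairPartitions.mp hπb).1.1, hcomp]
    rw [Finset.sum_congr rfl (fun π hπ => by rw [hcc π hπ])]
    rw [Finset.sum_const, fiber_card_s12 σ hσ]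
    have hcv : ∀ V ∈ σ, cval V.card =
        2 * ((1 / 2 : ℝ) ^ (V.card / 2)) * ((Eset V).card : ℝ) := by
      intro V hV
      rw [cval, Eset_card (hVne V hV)]
    rw [Finset.prod_congr rfl hcv]
    rw [Finset.prod_mul_distrib, Finset.prod_mul_distrib, Finset.prod_const,
      Finset.prod_pow_eq_pow_sum]
    rw [nsmul_eq_mul, Nat.cast_prod]
    by_cases hz : ∃ V ∈ σ, (Eset V).card = 0
    · obtain ⟨V, hV, hVz⟩ := hz
      have h1 : ∏ V ∈ σ, ((Eset V).card : ℝ) = 0 := by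
        apply Finset.prod_eq_zero hV
        rw [hVz, Nat.cast_zero]
      rw [h1]
      ring
    · push_neg at hz
      have heven : ∀ V ∈ σ, Even V.card := by
        intro V hV
        have hne : (Eset V).Nonempty := Finset.card_pos.mp (Nat.pos_of_ne_zero (hz V hV))
        obtain ⟨ρ, hρ⟩ := hne
        have := pairPartitionOn_card (mem_Eset.mp hρ).1
        exact ⟨ρ.card, by omega⟩
      rw [sum_half_eq (hblocksum σ hσ) heven]
      ring

end Master
section Final
open scoped Classical

lemma bicon_two : biconPairPartitions 2 = {({Finset.univ} : Finset (Finset (Fin 2)))} := by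
  ext τ
  rw [mem_biconPairPartitions, Finset.mem_singleton]
  constructor
  · rintro ⟨hpp, _, _⟩
    have huniv : Finset.univ ∈ τ := by
      obtain ⟨B, ⟨hB, h0B⟩, _⟩ := hpp.1.2 0 (Finset.mem_univ 0)
      have : B = Finset.univ := B.eq_univ_of_card (by rw [hpp.2 B hB]; rfl)
      rwa [← this]
    ext W
    rw [Finset.mem_singleton]
    constructor
    · intro hW
      obtain ⟨x, hx⟩ := (hpp.1.1 W hW).1
      exact part_eq_of_mem hpp.1 hW huniv hx (Finset.mem_univ x)
    · rintro rfl; exact huniv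
  · rintro rfl
    refine ⟨⟨⟨?_, ?_⟩, ?_⟩, ?_, ?_⟩
    · intro B hB
      rw [Finset.mem_singleton] at hB
      subst hB
      exact ⟨⟨0, Finset.mem_univ 0⟩, Finset.Subset.refl _⟩
    · intro i _
      refine ⟨Finset.univ, ⟨Finset.mem_singleton_self _, Finset.mem_univ i⟩, ?_⟩
      rintro W ⟨hW, _⟩
      exact Finset.mem_singleton.mp hW
    · intro B hB
      rw [Finset.mem_singleton] at hB
      subst hB
      rfl
    · refine ⟨SimpleGraph.Coloring.mk (fun _ => 0) ?_⟩
      rintro v w ⟨hvw, _⟩ _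
      exact hvw (Subtype.ext ((Finset.mem_singleton.mp v.2).trans
        (Finset.mem_singleton.mp w.2).symm))
    · rw [IsConnectedPart, SimpleGraph.connected_iff]
      constructor
      · intro v w
        have : v = w := Subtype.ext ((Finset.mem_singleton.mp v.2).trans
          (Finset.mem_singleton.mp w.2).symm)
        rw [this]
      · exact ⟨⟨Finset.univ, Finset.mem_singleton_self _⟩⟩

lemma bicon_two_card : (biconPairPartitions 2).card = 1 := by
  rw [bicon_two, Finset.card_singleton]

theorem free_cumulants_of_mu1 (κ : ℕ → ℝ)
    (hκ : ∀ p : ℕ, 0 < p →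
      mu1Moment p = ∑ σ ∈ ncPartitions p, ∏ V ∈ σ, κ V.card) :
    (∀ n : ℕ, Odd n → κ n = 0) ∧ κ 2 = 1 ∧
      ∀ n : ℕ, Even n → 4 ≤ n →
        κ n = 2 * (1 / 2 : ℝ) ^ (n / 2) * (biconPairPartitions n).card := by
  have hkey : ∀ p : ℕ, 0 < p → κ p = cval p := by
    intro p
    induction p using Nat.strong_induction_on with
    | _ p ih =>
      intro hp
      have hne : Nonempty (Fin p) := ⟨⟨0, hp⟩⟩
      have hmain : (∑ σ ∈ ncPartitions p, ∏ V ∈ σ, κ V.card) =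
          ∑ σ ∈ ncPartitions p, ∏ V ∈ σ, cval V.card :=
        (hκ p hp).symm.trans (master p hp)
      set σ₀ : Finset (Finset (Fin p)) := {Finset.univ} with hσ₀def
      have hσ₀ : σ₀ ∈ ncPartitions p := by
        rw [mem_ncPartitions]
        refine ⟨⟨?_, ?_⟩, ?_⟩
        · intro V hV
          rw [hσ₀def, Finset.mem_singleton] at hV
          subst hV
          exact ⟨Finset.univ_nonempty, Finset.Subset.refl _⟩
        · intro i _
          refine ⟨Finset.univ, ⟨Finset.mem_singleton_self _, Finset.mem_univ i⟩, ?_⟩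
          rintro W ⟨hW, _⟩
          exact Finset.mem_singleton.mp hW
        · intro V hV W hW hne
          rw [hσ₀def, Finset.mem_singleton] at hV hW
          exact absurd (hV.trans hW.symm) hne
      have hcards : ∀ σ ∈ (ncPartitions p).erase σ₀, ∀ V ∈ σ, 0 < V.card ∧ V.card < p := by
        intro σ hσ V hV
        obtain ⟨hne', hσ'⟩ := Finset.mem_erase.mp hσ
        obtain ⟨hσp, _⟩ := mem_ncPartitions.mp hσ'
        have h1 : 0 < V.card := Finset.card_pos.mpr (hσp.1 V hV).1
        have h2 : V.card ≤ p := by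
          have := Finset.card_le_card (hσp.1 V hV).2
          rwa [Finset.card_univ, Fintype.card_fin] at this
        refine ⟨h1, lt_of_le_of_ne h2 ?_⟩
        intro hcard
        have hVuniv : V = Finset.univ := V.eq_univ_of_card (by
          rw [hcard, Fintype.card_fin])
        apply hne'
        rw [hσ₀def]
        ext W
        rw [Finset.mem_singleton]
        constructor
        · intro hW
          obtain ⟨x, hx⟩ := (hσp.1 W hW).1
          exact part_eq_of_mem hσp hW (hVuniv ▸ hV) hx (hVuniv ▸ Finset.mem_univ x)
        · rintro rfl
          exact hVuniv ▸ hV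
      rw [← Finset.add_sum_erase _ _ hσ₀, ← Finset.add_sum_erase _ _ hσ₀] at hmain
      have hrest : (∑ σ ∈ (ncPartitions p).erase σ₀, ∏ V ∈ σ, κ V.card) =
          ∑ σ ∈ (ncPartitions p).erase σ₀, ∏ V ∈ σ, cval V.card := by
        refine Finset.sum_congr rfl ?_
        intro σ hσ
        refine Finset.prod_congr rfl ?_
        intro V hV
        obtain ⟨h1, h2⟩ := hcards σ hσ V hV
        exact ih V.card h2 h1
      rw [hrest] at hmain
      have hκp : (∏ V ∈ σ₀, κ V.card) = κ p := by
        rw [hσ₀def, Finset.prod_singleton, Finset.card_univ, Fintype.card_fin]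
      have hcp : (∏ V ∈ σ₀, cval V.card) = cval p := by
        rw [hσ₀def, Finset.prod_singleton, Finset.card_univ, Fintype.card_fin]
      rw [hκp, hcp] at hmain
      exact add_right_cancel hmain
  refine ⟨?_, ?_, ?_⟩
  · intro n hodd
    rw [hkey n hodd.pos, cval, bicon_odd_empty hodd]
    simp
  · rw [hkey 2 (by norm_num), cval, bicon_two_card]
    norm_num
  · intro n _ h4
    rw [hkey n (by omega)]
    rfl

end Final
end
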